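/- arXiv:1704.08926 — 12 statements merged into one kernel-verified Lean document; each statement's English description precedes it below -/
import Mathlib

section
/- Let Λ be a nonempty closed subset of E, let m ≥ 1 be an integer and let c ∈ [0,1). Suppose the sequence (x_k)_{k∈ℕ} in Λ is linearly extendible on Λ with frequency m and rate c, witnessed by an extension sequence (z_k)_{k∈ℕ}. Then there exists a point x̃ ∈ Λ such that ‖x_k − x̃‖ ≤ γ·c^k for all k ∈ ℕ, where γ = m‖z_1 − z_0‖/(1 − c); in particular (x_k) converges R-linearly to x̃ with rate c. -/
/-- If `(x k)` is linearly extendible on the closed nonempty set `Λ`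
with frequency `m ≥ 1` and rate `c ∈ [0,1)`, witnessed by the extension sequence `(z k)`,
then there is `xlim ∈ Λ` with `‖x k − xlim‖ ≤ γ c^k` for all `k`, where
`γ = m‖z 1 − z 0‖/(1 − c)`; in particular `(x k)` converges R-linearly to `xlim` with rate `c`. -/
theorem linear_extendibility_implies_Rlinear_convergence
    {E : Type*} [NormedAddCommGroup E] [InnerProductSpace ℝ E] [FiniteDimensional ℝ E]
    (Λ : Set E) (hΛclosed : IsClosed Λ) (hΛne : Λ.Nonempty)
    (m : ℕ) (hm : 1 ≤ m) (c : ℝ) (hc0 : 0 ≤ c) (hc1 : c < 1)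
    (x z : ℕ → E)
    (hzΛ : ∀ k, z k ∈ Λ)
    (hzx : ∀ k, z (m * k) = x k)
    (hdec : ∀ k, ‖z (k + 2) - z (k + 1)‖ ≤ ‖z (k + 1) - z k‖)
    (hrate : ∀ k, ‖z (m * (k + 1) + 1) - z (m * (k + 1))‖ ≤ c * ‖z (m * k + 1) - z (m * k)‖) :
    ∃ xlim ∈ Λ, ∀ k, ‖x k - xlim‖ ≤ (m * ‖z 1 - z 0‖ / (1 - c)) * c ^ k := by
  set d : ℕ → ℝ := fun k => ‖z (k + 1) - z k‖ with hd
  have hanti : Antitone d := antitone_nat_of_succ_le (fun k => hdec k)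
  have hgeo : ∀ k, d (m * k) ≤ c ^ k * d 0 := by
    intro k
    induction k with
    | zero => simp [d]
    | succ n ih =>
      calc d (m * (n + 1)) ≤ c * d (m * n) := hrate n
        _ ≤ c * (c ^ n * d 0) := mul_le_mul_of_nonneg_left ih hc0
        _ = c ^ (n + 1) * d 0 := by ring
  have hstep : ∀ k, dist (x k) (x (k + 1)) ≤ (m * d 0) * c ^ k := by
    intro k
    have h1 : dist (x k) (x (k + 1)) = dist (z (m * k)) (z (m * k + m)) := by
      rw [← hzx k, ← hzx (k + 1), Nat.mul_succ]
    rw [h1]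
    calc dist (z (m * k)) (z (m * k + m))
        ≤ ∑ j ∈ Finset.range m, dist (z (m * k + j)) (z (m * k + j + 1)) :=
          dist_le_range_sum_dist (fun j => z (m * k + j)) m
      _ ≤ ∑ j ∈ Finset.range m, c ^ k * d 0 := by
          apply Finset.sum_le_sum
          intro j hj
          have h2 : dist (z (m * k + j)) (z (m * k + j + 1)) = d (m * k + j) := by
            rw [dist_eq_norm', hd]
          rw [h2]
          exact le_trans (hanti (Nat.le_add_right _ _)) (hgeo k)
      _ = (m * d 0) * c ^ k := by
          rw [Finset.sum_const, Finset.card_range]; push_cast; ring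
  have hcauchy : CauchySeq x := cauchySeq_of_le_geometric c (m * d 0) hc1 hstep
  obtain ⟨xlim, hlim⟩ := cauchySeq_tendsto_of_complete hcauchy
  refine ⟨xlim, ?_, ?_⟩
  · exact hΛclosed.mem_of_tendsto hlim
      (Filter.Eventually.of_forall (fun k => hzx k ▸ hzΛ (m * k)))
  · intro k
    have hb := dist_le_of_le_geometric_of_tendsto c (m * d 0) hc1 hstep hlim k
    rw [← dist_eq_norm]
    calc dist (x k) xlim ≤ (m * d 0) * c ^ k / (1 - c) := hb
      _ = (m * ‖z 1 - z 0‖ / (1 - c)) * c ^ k := by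
          have : d 0 = ‖z 1 - z 0‖ := by simp [hd]
          rw [this]; ring
end

section
/- Let Λ ⊆ E, let T : E ⇉ E, and let x̃ be an isolated point of Fix T ∩ Λ, i.e. there is δ₀ > 0 with Fix T ∩ Λ ∩ B_{δ₀}(x̃) = {x̃}. Suppose T is almost nonexpansive on B_δ(x̃) ∩ Λ with some violation ε ≥ 0 for some δ > 0. Then there exists ρ > 0 such that for every c ∈ [0,1) and every sequence (x_k)_{k∈ℕ} with x₀ ∈ B_ρ(x̃) ∩ Λ and x_{k+1} ∈ T x_k ⊆ Λ for all k, the sequence (x_k) is linearly monotone with respect to Fix T ∩ Λ with constant c if and only if (x_k) converges Q-linearly to x̃ with rate c. -/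
/-- If `xlim` is an isolated point of `Fix T ∩ Λ` and `T` is almost
nonexpansive on `B_δ(xlim) ∩ Λ`, then there is `ρ > 0` such that for every `c ∈ [0,1)` and
every iteration of `T` starting in `B_ρ(xlim) ∩ Λ` and remaining in `Λ`, linear monotonicity
with respect to `Fix T ∩ Λ` with constant `c` is equivalent to Q-linear convergence to
`xlim` with rate `c`. -/
theorem isolated_fixed_point_linear_monotone_iff_Qlinear
    {E : Type*} [NormedAddCommGroup E] [InnerProductSpace ℝ E] [FiniteDimensional ℝ E]
    (T : E → Set E) (Λ : Set E)
    (Fix : Set E) (hFixdef : Fix = {y : E | y ∈ T y})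
    (xlim : E) (hxlim : xlim ∈ Fix ∩ Λ)
    (δ₀ : ℝ) (hδ₀ : 0 < δ₀)
    (hisolated : Fix ∩ Λ ∩ Metric.ball xlim δ₀ = {xlim})
    (δ ε : ℝ) (hδ : 0 < δ) (hε : 0 ≤ ε)
    (hane : ∀ u ∈ Metric.ball xlim δ ∩ Λ, ∀ v ∈ Metric.ball xlim δ ∩ Λ,
      ∀ up ∈ T u, ∀ vp ∈ T v, ‖up - vp‖ ≤ Real.sqrt (1 + ε) * ‖u - v‖) :
    ∃ ρ > 0, ∀ c : ℝ, 0 ≤ c → c < 1 → ∀ x : ℕ → E,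
      x 0 ∈ Metric.ball xlim ρ ∩ Λ →
      (∀ k, x (k + 1) ∈ T (x k)) →
      (∀ k, T (x k) ⊆ Λ) →
      ((∀ k, Metric.infDist (x (k + 1)) (Fix ∩ Λ) ≤ c * Metric.infDist (x k) (Fix ∩ Λ)) ↔
        (∀ k, ‖x (k + 1) - xlim‖ ≤ c * ‖x k - xlim‖)) := by
  set s := Real.sqrt (1 + ε) with hs
  have hs1 : 1 ≤ s := Real.one_le_sqrt.mpr (by linarith)
  have hs0 : 0 < s := lt_of_lt_of_le one_pos hs1
  set m := min δ (δ₀ / 2) with hmdef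
  have hm : 0 < m := lt_min hδ (by linarith)
  refine ⟨m / s, div_pos hm hs0, ?_⟩
  set ρ := m / s with hρ
  have hsρ : s * ρ = m := by rw [hρ]; field_simp
  have hρm : ρ ≤ m := by
    rw [hρ]; exact div_le_self hm.le hs1
  have hρδ : ρ ≤ δ := hρm.trans (min_le_left _ _)
  have hρδ₀ : ρ ≤ δ₀ / 2 := hρm.trans (min_le_right _ _)
  -- key: near xlim, infDist to Fix ∩ Λ equals distance to xlim
  have hdist : ∀ y : E, ‖y - xlim‖ < δ₀ / 2 →
      Metric.infDist y (Fix ∩ Λ) = ‖y - xlim‖ := by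
    intro y hy
    refine le_antisymm ?_ ?_
    · calc Metric.infDist y (Fix ∩ Λ) ≤ dist y xlim :=
            Metric.infDist_le_dist_of_mem hxlim
        _ = ‖y - xlim‖ := dist_eq_norm _ _
    · by_contra hlt
      push_neg at hlt
      obtain ⟨w, hw, hdw⟩ := (Metric.infDist_lt_iff ⟨xlim, hxlim⟩).mp hlt
      rw [dist_eq_norm] at hdw
      have hlt : ‖y - w‖ < ‖y - xlim‖ := hdw
      have hwx : w ∈ Fix ∩ Λ ∩ Metric.ball xlim δ₀ := by
        refine ⟨hw, ?_⟩
        rw [Metric.mem_ball, dist_eq_norm]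
        calc ‖w - xlim‖ ≤ ‖w - y‖ + ‖y - xlim‖ := norm_sub_le_norm_sub_add_norm_sub _ _ _
          _ < ‖y - xlim‖ + ‖y - xlim‖ := by
              rw [norm_sub_rev]; linarith
          _ < δ₀ := by linarith
      rw [hisolated] at hwx
      rw [Set.mem_singleton_iff] at hwx
      subst hwx
      exact absurd hlt (lt_irrefl _)
  intro c hc0 hc1 x hx0 hstep hsub
  have hΛ : ∀ k, x k ∈ Λ := by
    intro k
    cases k with
    | zero => exact hx0.2
    | succ n => exact hsub n (hstep n)
  have hxT : xlim ∈ T xlim := by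
    have := hxlim.1; rw [hFixdef] at this; exact this
  have hone : ∀ k, ‖x k - xlim‖ < δ → ‖x (k + 1) - xlim‖ ≤ s * ‖x k - xlim‖ := by
    intro k hk
    exact hane (x k) ⟨by rw [Metric.mem_ball, dist_eq_norm]; exact hk, hΛ k⟩
      xlim ⟨Metric.mem_ball_self hδ, hxlim.2⟩ (x (k + 1)) (hstep k) xlim hxT
  have hx00 : ‖x 0 - xlim‖ < ρ := by
    have := hx0.1; rwa [Metric.mem_ball, dist_eq_norm] at this
  constructor
  · intro hmono
    have hball : ∀ k, ‖x k - xlim‖ < ρ := by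
      intro k
      induction k with
      | zero => exact hx00
      | succ n ih =>
        have h1 : ‖x (n + 1) - xlim‖ ≤ s * ‖x n - xlim‖ :=
          hone n (lt_of_lt_of_le ih hρδ)
        have h2 : ‖x (n + 1) - xlim‖ < δ₀ / 2 := by
          calc ‖x (n + 1) - xlim‖ ≤ s * ‖x n - xlim‖ := h1
            _ < s * ρ := by exact (mul_lt_mul_iff_right₀ hs0).mpr ih
            _ = m := hsρ
            _ ≤ δ₀ / 2 := min_le_right _ _
        have e1 := hdist (x (n + 1)) h2
        have e0 := hdist (x n) (lt_of_lt_of_le ih hρδ₀)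
        have := hmono n
        rw [e1, e0] at this
        calc ‖x (n + 1) - xlim‖ ≤ c * ‖x n - xlim‖ := this
          _ ≤ 1 * ‖x n - xlim‖ := by
              exact mul_le_mul_of_nonneg_right hc1.le (norm_nonneg _)
          _ = ‖x n - xlim‖ := one_mul _
          _ < ρ := ih
    intro k
    have e1 := hdist (x (k + 1)) (lt_of_lt_of_le (hball (k + 1)) hρδ₀)
    have e0 := hdist (x k) (lt_of_lt_of_le (hball k) hρδ₀)
    have := hmono k
    rwa [e1, e0] at this
  · intro hq
    have hball : ∀ k, ‖x k - xlim‖ < ρ := by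
      intro k
      induction k with
      | zero => exact hx00
      | succ n ih =>
        calc ‖x (n + 1) - xlim‖ ≤ c * ‖x n - xlim‖ := hq n
          _ ≤ 1 * ‖x n - xlim‖ := mul_le_mul_of_nonneg_right hc1.le (norm_nonneg _)
          _ = ‖x n - xlim‖ := one_mul _
          _ < ρ := ih
    intro k
    rw [hdist (x (k + 1)) (lt_of_lt_of_le (hball (k + 1)) hρδ₀),
      hdist (x k) (lt_of_lt_of_le (hball k) hρδ₀)]
    exact hq k
end

section
/- Let T : E ⇉ E and Λ ⊆ E be such that T x is nonempty and T x ⊆ Λ for every x ∈ Λ, let Fix T ∩ Λ be closed and nonempty, let Ω ⊆ Λ, and let c ∈ [0,1). Suppose that for every x₀ ∈ Ω, every sequence (x_k)_{k∈ℕ} with x_{k+1} ∈ T x_k for all k is linearly monotone with respect to Fix T ∩ Λ with constant c. Then for every x ∈ Ω, dist(x, Fix T ∩ Λ) ≤ (1/(1−c))·inf{‖x⁺ − x‖ : x⁺ ∈ T x}; that is, the mapping Φ = T − Id is metrically subregular on Ω for 0 relative to Λ with constant 1/(1−c). -/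
/-- If every iteration of `T` started in `Ω ⊆ Λ` is linearly monotone with
respect to `Fix T ∩ Λ` with constant `c ∈ [0,1)`, then `Φ = T − Id` is metrically subregular
on `Ω` for `0` relative to `Λ` with constant `1/(1−c)`; explicitly,
`dist(x, Fix T ∩ Λ) ≤ (1/(1−c))·inf{‖x⁺ − x‖ : x⁺ ∈ T x}` for every `x ∈ Ω`. -/
theorem necessity_of_metric_subregularity
    {E : Type*} [NormedAddCommGroup E] [InnerProductSpace ℝ E] [FiniteDimensional ℝ E]
    (T : E → Set E) (Λ : Set E)
    (hT : ∀ x ∈ Λ, (T x).Nonempty ∧ T x ⊆ Λ)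
    (Fix : Set E) (hFixdef : Fix = {y : E | y ∈ T y})
    (hclosed : IsClosed (Fix ∩ Λ)) (hne : (Fix ∩ Λ).Nonempty)
    (Ω : Set E) (hΩΛ : Ω ⊆ Λ)
    (c : ℝ) (hc0 : 0 ≤ c) (hc1 : c < 1)
    (hmono : ∀ x : ℕ → E, x 0 ∈ Ω → (∀ k, x (k + 1) ∈ T (x k)) →
      ∀ k, Metric.infDist (x (k + 1)) (Fix ∩ Λ) ≤ c * Metric.infDist (x k) (Fix ∩ Λ)) :
    ∀ x ∈ Ω, Metric.infDist x (Fix ∩ Λ) ≤ (1 / (1 - c)) * Metric.infDist x (T x) := by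
  intro x hx
  have hc : (0:ℝ) < 1 - c := by linarith
  -- a "successor" function
  have hg : ∀ y, ∃ z, y ∈ Λ → z ∈ T y := by
    intro y
    by_cases hy : y ∈ Λ
    · obtain ⟨z, hz⟩ := (hT y hy).1
      exact ⟨z, fun _ => hz⟩
    · exact ⟨y, fun h => absurd h hy⟩
  choose g hgmem using hg
  -- Key step: for each x⁺ ∈ T x, (1-c)·dist(x,F) ≤ dist x x⁺
  have key : ∀ xp ∈ T x, (1 - c) * Metric.infDist x (Fix ∩ Λ) ≤ dist x xp := by
    intro xp hxp
    -- build the sequence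
    let seq : ℕ → E := fun n => Nat.rec x (fun k xk => if k = 0 then xp else g xk) n
    have hseq0 : seq 0 = x := rfl
    have hseq1 : seq 1 = xp := rfl
    have hseqs : ∀ k, seq (k + 1) = if k = 0 then xp else g (seq k) := fun k => rfl
    have hΛ : ∀ k, seq k ∈ Λ ∧ seq (k + 1) ∈ T (seq k) := by
      intro k
      induction k with
      | zero =>
        exact ⟨hΩΛ hx, by rw [hseqs]; simpa [hseq0] using hxp⟩
      | succ n ih =>
        have h1 : seq (n + 1) ∈ Λ := (hT _ ih.1).2 ih.2
        refine ⟨h1, ?_⟩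
        rw [hseqs (n+1)]
        simp only [Nat.succ_ne_zero, if_false]
        exact hgmem _ h1
    have h0 := hmono seq (by rw [hseq0]; exact hx) (fun k => (hΛ k).2) 0
    rw [hseq0] at h0; rw [show seq (0+1) = xp from rfl] at h0
    have h2 : Metric.infDist x (Fix ∩ Λ) ≤ Metric.infDist xp (Fix ∩ Λ) + dist x xp :=
      Metric.infDist_le_infDist_add_dist
    nlinarith [Metric.infDist_nonneg (x := x) (s := Fix ∩ Λ)]
  -- deduce (1-c)·dist(x,F) ≤ infDist x (T x)
  have hTx : (T x).Nonempty := (hT x (hΩΛ hx)).1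
  have h3 : (1 - c) * Metric.infDist x (Fix ∩ Λ) ≤ Metric.infDist x (T x) := by
    by_contra h
    push_neg at h
    obtain ⟨xp, hxp, hlt⟩ := (Metric.infDist_lt_iff hTx).1 h
    exact absurd (key xp hxp) (not_le.2 hlt)
  rw [div_mul_eq_mul_div, le_div_iff₀ hc, one_mul]
  linarith
end

section
/- Let Λ, A, B be closed subsets of E, let S be nonempty with x̄ ∈ S ⊆ A ∩ B ∩ Λ, let n ≥ 1 be an integer, c ∈ [0,1), and ρ > 0. Suppose that for every alternating projections sequence (x_k),(b_k) for (A,B) with x₀ ∈ A ∩ B_ρ(x̄) ∩ Λ there exists j ∈ {0,1,…,n−1} such that x_{j+nk} ∈ Λ for all k ∈ ℕ and dist(x_{j+n(k+1)}, S) ≤ c·dist(x_{j+nk}, S) for all k ∈ ℕ. Then dist(x, A ∩ B ∩ Λ) ≤ κ·dist(x, B) for all x ∈ A ∩ B_ρ(x̄) ∩ Λ, where κ = 2(2n² − 1 − c(n−1))/(1−c); in particular the collection {A,B} is subtransversal at x̄ relative to Λ. -/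
/-- The (set-valued) projector onto a set `A`. -/
def projSet {E : Type*} [NormedAddCommGroup E] (A : Set E) (x : E) : Set E :=
  {a | a ∈ A ∧ ‖x - a‖ = Metric.infDist x A}

/-- If every alternating projections sequence for `(A,B)` starting in
`A ∩ B_ρ(xbar) ∩ Λ` has a subsequence `(x_{j+nk})_k` remaining in `Λ` and linearly monotone
with respect to `S` with constant `c`, then `dist(x, A ∩ B ∩ Λ) ≤ κ·dist(x, B)` on
`A ∩ B_ρ(xbar) ∩ Λ` with `κ = 2(2n² − 1 − c(n−1))/(1−c)`; in particular `{A,B}` is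
subtransversal at `xbar` relative to `Λ`. -/
theorem subtransversality_necessary_for_linear_monotonicity_of_subsequences
    {E : Type*} [NormedAddCommGroup E] [InnerProductSpace ℝ E] [FiniteDimensional ℝ E]
    (Λ A B S : Set E) (hΛ : IsClosed Λ) (hA : IsClosed A) (hB : IsClosed B)
    (xbar : E) (hxbarS : xbar ∈ S) (hS : S ⊆ A ∩ B ∩ Λ)
    (n : ℕ) (hn : 1 ≤ n) (c ρ : ℝ) (hc0 : 0 ≤ c) (hc1 : c < 1) (hρ : 0 < ρ)
    (hyp : ∀ x b : ℕ → E,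
      (∀ k, b k ∈ projSet B (x k)) → (∀ k, x (k + 1) ∈ projSet A (b k)) →
      x 0 ∈ A ∩ Metric.ball xbar ρ ∩ Λ →
      ∃ j < n, (∀ k, x (j + n * k) ∈ Λ) ∧
        ∀ k, Metric.infDist (x (j + n * (k + 1))) S ≤ c * Metric.infDist (x (j + n * k)) S) :
    ∀ x ∈ A ∩ Metric.ball xbar ρ ∩ Λ,
      Metric.infDist x (A ∩ B ∩ Λ) ≤
        (2 * (2 * (n : ℝ) ^ 2 - 1 - c * ((n : ℝ) - 1)) / (1 - c)) * Metric.infDist x B := by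
  intro x hx
  have hxA : x ∈ A := hx.1.1
  have hSne : S.Nonempty := ⟨xbar, hxbarS⟩
  have hBne : B.Nonempty := ⟨xbar, (hS hxbarS).1.2⟩
  have hAne : A.Nonempty := ⟨xbar, (hS hxbarS).1.1⟩
  -- choice functions for the projectors
  have hfB : ∀ y : E, ∃ z, z ∈ projSet B y := by
    intro y
    obtain ⟨z, hzB, hz⟩ := hB.exists_infDist_eq_dist hBne y
    exact ⟨z, hzB, by rw [← dist_eq_norm, hz]⟩
  have hgA : ∀ y : E, ∃ z, z ∈ projSet A y := by
    intro y
    obtain ⟨z, hzA, hz⟩ := hA.exists_infDist_eq_dist hAne y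
    exact ⟨z, hzA, by rw [← dist_eq_norm, hz]⟩
  choose f hf using hfB
  choose g hg using hgA
  -- the alternating projections sequence starting at x
  set xs : ℕ → E := fun k => Nat.rec (motive := fun _ => E) x (fun _ xk => g (f xk)) k with hxs
  set bs : ℕ → E := fun k => f (xs k) with hbs
  have hbsmem : ∀ k, bs k ∈ projSet B (xs k) := fun k => hf (xs k)
  have hxsmem : ∀ k, xs (k + 1) ∈ projSet A (bs k) := fun k => hg (bs k)
  have hxs0 : xs 0 = x := rfl
  have hxsA : ∀ k, xs k ∈ A := by
    intro k
    cases k with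
    | zero => exact hxA
    | succ m => exact (hxsmem m).1
  set d := Metric.infDist x B with hd
  have hd0 : 0 ≤ d := Metric.infDist_nonneg
  -- half-step estimates
  have hhalf : ∀ k, dist (bs k) (xs (k + 1)) ≤ Metric.infDist (xs k) B := by
    intro k
    calc dist (bs k) (xs (k + 1)) = ‖bs k - xs (k + 1)‖ := by rw [dist_eq_norm]
      _ = Metric.infDist (bs k) A := (hxsmem k).2
      _ ≤ dist (bs k) (xs k) := Metric.infDist_le_dist_of_mem (hxsA k)
      _ = ‖xs k - bs k‖ := by rw [dist_eq_norm, norm_sub_rev]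
      _ = Metric.infDist (xs k) B := (hbsmem k).2
  have hfirst : ∀ k, dist (xs k) (bs k) = Metric.infDist (xs k) B := by
    intro k
    rw [dist_eq_norm]; exact (hbsmem k).2
  -- distances to B along the sequence are nonincreasing
  have hEmono : ∀ k, Metric.infDist (xs (k + 1)) B ≤ Metric.infDist (xs k) B := by
    intro k
    calc Metric.infDist (xs (k + 1)) B ≤ dist (xs (k + 1)) (bs k) :=
          Metric.infDist_le_dist_of_mem (hbsmem k).1
      _ = dist (bs k) (xs (k + 1)) := dist_comm _ _
      _ ≤ Metric.infDist (xs k) B := hhalf k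
  have hEd : ∀ k, Metric.infDist (xs k) B ≤ d := by
    intro k
    induction k with
    | zero => rw [hxs0]
    | succ m ih => exact le_trans (hEmono m) ih
  -- each step moves by at most 2d
  have hstep : ∀ k, dist (xs k) (xs (k + 1)) ≤ 2 * d := by
    intro k
    calc dist (xs k) (xs (k + 1)) ≤ dist (xs k) (bs k) + dist (bs k) (xs (k + 1)) :=
          dist_triangle _ _ _
      _ ≤ Metric.infDist (xs k) B + Metric.infDist (xs k) B := by
          rw [hfirst k]; exact add_le_add le_rfl (hhalf k)
      _ ≤ d + d := add_le_add (hEd k) (hEd k)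
      _ = 2 * d := by ring
  have hblock : ∀ (a m : ℕ), dist (xs a) (xs (a + m)) ≤ 2 * (m : ℝ) * d := by
    intro a m
    induction m with
    | zero => simp
    | succ i ih =>
      have h1 : dist (xs a) (xs (a + (i + 1))) ≤
          dist (xs a) (xs (a + i)) + dist (xs (a + i)) (xs (a + i + 1)) := by
        have := dist_triangle (xs a) (xs (a + i)) (xs (a + i + 1))
        simpa [Nat.add_assoc] using this
      have h2 := hstep (a + i)
      have : dist (xs a) (xs (a + (i + 1))) ≤ 2 * (i : ℝ) * d + 2 * d := by linarith
      push_cast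
      linarith
  -- apply the hypothesis
  obtain ⟨j, hjn, -, hjdec⟩ := hyp xs bs hbsmem hxsmem (hxs0 ▸ hx)
  have hk0 : Metric.infDist (xs (j + n)) S ≤ c * Metric.infDist (xs j) S := by
    have := hjdec 0
    simpa using this
  set D := Metric.infDist (xs j) S with hD
  have hD0 : 0 ≤ D := Metric.infDist_nonneg
  have hlip : D ≤ Metric.infDist (xs (j + n)) S + dist (xs j) (xs (j + n)) :=
    Metric.infDist_le_infDist_add_dist
  have hjn' : dist (xs j) (xs (j + n)) ≤ 2 * (n : ℝ) * d := hblock j n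
  have hkey : (1 - c) * D ≤ 2 * (n : ℝ) * d := by nlinarith [hk0, hlip, hjn']
  -- conclude
  have hsub : Metric.infDist x (A ∩ B ∩ Λ) ≤ Metric.infDist x S :=
    Metric.infDist_le_infDist_of_subset hS hSne
  have hxj : dist x (xs j) ≤ 2 * (j : ℝ) * d := by
    have := hblock 0 j
    simpa [hxs0] using this
  have hxS : Metric.infDist x S ≤ D + dist x (xs j) :=
    Metric.infDist_le_infDist_add_dist
  have h1c : (0 : ℝ) < 1 - c := by linarith
  have hjr : (j : ℝ) ≤ (n : ℝ) - 1 := by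
    have : (j : ℝ) + 1 ≤ (n : ℝ) := by exact_mod_cast hjn
    linarith
  have hnr : (1 : ℝ) ≤ (n : ℝ) := by exact_mod_cast hn
  rw [div_mul_eq_mul_div, le_div_iff₀ h1c]
  have hfinal : Metric.infDist x (A ∩ B ∩ Λ) ≤ D + 2 * (j : ℝ) * d := by
    calc Metric.infDist x (A ∩ B ∩ Λ) ≤ Metric.infDist x S := hsub
      _ ≤ D + dist x (xs j) := hxS
      _ ≤ D + 2 * (j : ℝ) * d := by linarith
  nlinarith [hfinal, hkey, hd0, hD0, h1c, hjr, hnr,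
    mul_nonneg hd0 (sub_nonneg.mpr hnr),
    mul_nonneg (mul_nonneg hd0 (sub_nonneg.mpr hnr)) (le_of_lt h1c),
    mul_nonneg (mul_nonneg hd0 h1c.le) (sub_nonneg.mpr hjr),
    mul_nonneg (mul_nonneg hd0 (by linarith : (0:ℝ) ≤ (n:ℝ))) (sub_nonneg.mpr hnr)]
end

section
/- Let A, B be closed subsets of E, let (x_k),(b_k) be an alternating projections sequence for (A,B), and suppose (x_k) converges R-linearly to x̄ ∈ A ∩ B with rate c ∈ [0,1), i.e. there is γ > 0 with ‖x_k − x̄‖ ≤ γ·c^k for all k ∈ ℕ. Let S be any set with x̄ ∈ S ⊆ A ∩ B and assume dist(x_k, S) > 0 for every k ∈ ℕ. Then there exists a strictly increasing sequence of indices (k_n)_{n∈ℕ} with k₀ = 0 such that dist(x_{k_{n+1}}, S) ≤ c·dist(x_{k_n}, S) for all n ∈ ℕ; that is, the subsequence (x_{k_n}) is linearly monotone with respect to S with constant c. -/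
/-- If an alternating projections sequence `(x_k)` converges R-linearly to
`xbar ∈ A ∩ B` with rate `c` and `dist(x_k, S) > 0` for all `k` (where `xbar ∈ S ⊆ A ∩ B`),
then some subsequence `(x_{k_n})` with `k₀ = 0` is linearly monotone with respect to `S`
with constant `c`. -/
theorem Rlinear_convergence_yields_linearly_monotone_subsequence
    {E : Type*} [NormedAddCommGroup E] [InnerProductSpace ℝ E] [FiniteDimensional ℝ E]
    (A B S : Set E) (hA : IsClosed A) (hB : IsClosed B)
    (x b : ℕ → E)
    (hb : ∀ k, b k ∈ projSet B (x k)) (hx : ∀ k, x (k + 1) ∈ projSet A (b k))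
    (xbar : E) (hxbarAB : xbar ∈ A ∩ B)
    (γ c : ℝ) (hγ : 0 < γ) (hc0 : 0 ≤ c) (hc1 : c < 1)
    (hR : ∀ k, ‖x k - xbar‖ ≤ γ * c ^ k)
    (hxbarS : xbar ∈ S) (hS : S ⊆ A ∩ B)
    (hpos : ∀ k, 0 < Metric.infDist (x k) S) :
    ∃ ks : ℕ → ℕ, StrictMono ks ∧ ks 0 = 0 ∧
      ∀ n, Metric.infDist (x (ks (n + 1))) S ≤ c * Metric.infDist (x (ks n)) S := by
  -- c must be positive, otherwise x 1 = xbar ∈ S contradicts hpos.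
  have hcpos : 0 < c := by
    rcases hc0.lt_or_eq with h | h
    · exact h
    · exfalso
      have h1 : ‖x 1 - xbar‖ ≤ 0 := by
        have := hR 1
        rw [← h] at this
        simpa using this
      have heq : x 1 = xbar := by
        have := le_antisymm h1 (norm_nonneg _)
        rwa [norm_eq_zero, sub_eq_zero] at this
      have hp := hpos 1
      rw [heq, Metric.infDist_zero_of_mem hxbarS] at hp
      exact lt_irrefl _ hp
  have hdle : ∀ m, Metric.infDist (x m) S ≤ γ * c ^ m := fun m =>
    le_trans ((Metric.infDist_le_dist_of_mem hxbarS).trans_eq (dist_eq_norm _ _)) (hR m)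
  have key : ∀ k, ∃ m, k < m ∧ Metric.infDist (x m) S ≤ c * Metric.infDist (x k) S := by
    intro k
    have hcd : 0 < c * Metric.infDist (x k) S := mul_pos hcpos (hpos k)
    have htend : Filter.Tendsto (fun m : ℕ => γ * c ^ m) Filter.atTop (nhds 0) := by
      simpa using (tendsto_pow_atTop_nhds_zero_of_lt_one hc0 hc1).const_mul γ
    have hev := htend.eventually (gt_mem_nhds hcd)
    have := (hev.and (Filter.eventually_gt_atTop k)).exists
    rcases this with ⟨m, hm1, hm2⟩
    exact ⟨m, hm2, le_trans (hdle m) hm1.le⟩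
  choose f hf1 hf2 using key
  refine ⟨fun n => Nat.rec 0 (fun _ kn => f kn) n, strictMono_nat_of_lt_succ fun n => ?_, rfl, fun n => ?_⟩
  · exact hf1 _
  · exact hf2 _
end

section
/- Let Λ, A, B be closed subsets of E, let x̄ ∈ S ⊆ A ∩ B ∩ Λ, let m ≥ 1 be an integer, c ∈ [0,1), and ρ > 0. Suppose that every alternating projections sequence (x_k),(b_k) for (A,B) with x₀ ∈ A ∩ B_ρ(x̄) ∩ Λ lies in Λ, converges R-linearly with rate c to a point of S, and admits an index k₁ with 1 ≤ k₁ ≤ m and dist(x_{k₁}, S) ≤ c·dist(x₀, S). Then dist(x, A ∩ B ∩ Λ) ≤ (2m/(1−c))·dist(x, B) for all x ∈ A ∩ B_ρ(x̄) ∩ Λ; in particular the collection {A,B} is subtransversal at x̄ relative to Λ with constant at most 2m/(1−c). -/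
lemma projSet_nonempty {E : Type*} [NormedAddCommGroup E] [NormedSpace ℝ E]
    [FiniteDimensional ℝ E] {A : Set E} (hA : IsClosed A) (hne : A.Nonempty) (x : E) :
    ∃ a, a ∈ projSet A x := by
  obtain ⟨y, hy, hdy⟩ := hA.exists_infDist_eq_dist hne x
  exact ⟨y, hy, by rw [← dist_eq_norm, hdy]⟩

/-- If every alternating projections sequence for `(A,B)` starting in
`A ∩ B_ρ(xbar) ∩ Λ` lies in `Λ`, converges R-linearly with rate `c` to a point of `S`, and
admits an index `k₁` with `1 ≤ k₁ ≤ m` and `dist(x_{k₁}, S) ≤ c·dist(x₀, S)`, then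
`dist(x, A ∩ B ∩ Λ) ≤ (2m/(1−c))·dist(x, B)` on `A ∩ B_ρ(xbar) ∩ Λ`; in particular `{A,B}`
is subtransversal at `xbar` relative to `Λ` with constant at most `2m/(1−c)`. -/
theorem subtransversality_necessary_for_linear_convergence
    {E : Type*} [NormedAddCommGroup E] [InnerProductSpace ℝ E] [FiniteDimensional ℝ E]
    (Λ A B S : Set E) (hΛ : IsClosed Λ) (hA : IsClosed A) (hB : IsClosed B)
    (xbar : E) (hxbarS : xbar ∈ S) (hS : S ⊆ A ∩ B ∩ Λ)
    (m : ℕ) (hm : 1 ≤ m) (c ρ : ℝ) (hc0 : 0 ≤ c) (hc1 : c < 1) (hρ : 0 < ρ)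
    (hyp : ∀ x b : ℕ → E,
      (∀ k, b k ∈ projSet B (x k)) → (∀ k, x (k + 1) ∈ projSet A (b k)) →
      x 0 ∈ A ∩ Metric.ball xbar ρ ∩ Λ →
      (∀ k, x k ∈ Λ) ∧
      (∃ xlim ∈ S, ∃ γ > (0 : ℝ), ∀ k, ‖x k - xlim‖ ≤ γ * c ^ k) ∧
      (∃ k₁, 1 ≤ k₁ ∧ k₁ ≤ m ∧
        Metric.infDist (x k₁) S ≤ c * Metric.infDist (x 0) S)) :
    ∀ x ∈ A ∩ Metric.ball xbar ρ ∩ Λ,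
      Metric.infDist x (A ∩ B ∩ Λ) ≤ (2 * m / (1 - c)) * Metric.infDist x B := by
  intro x hx
  have hSne : S.Nonempty := ⟨xbar, hxbarS⟩
  have hAne : A.Nonempty := ⟨xbar, (hS hxbarS).1.1⟩
  have hBne : B.Nonempty := ⟨xbar, (hS hxbarS).1.2⟩
  choose pB hpB using projSet_nonempty hB hBne
  choose pA hpA using projSet_nonempty hA hAne
  set xs : ℕ → E := fun k => (fun z => pA (pB z))^[k] x with hxs
  set bs : ℕ → E := fun k => pB (xs k) with hbs
  have hxs0 : xs 0 = x := rfl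
  have hxsucc : ∀ k, xs (k + 1) = pA (bs k) := by
    intro k
    simp only [hxs, hbs, Function.iterate_succ_apply']
  obtain ⟨hΛseq, -, k₁, hk₁1, hk₁m, hdec⟩ :=
    hyp xs bs (fun k => hpB (xs k)) (fun k => by rw [hxsucc]; exact hpA (bs k))
      (by rw [hxs0]; exact hx)
  have dB := fun k => Metric.infDist (xs k) B
  -- each x_k lies in A
  have hmemA : ∀ k, xs k ∈ A := by
    intro k
    cases k with
    | zero => exact hx.1.1
    | succ n => rw [hxsucc]; exact (hpA (bs n)).1
  -- basic norm identities
  have hnormB : ∀ k, ‖xs k - bs k‖ = Metric.infDist (xs k) B := fun k => (hpB (xs k)).2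
  have hnormA : ∀ k, ‖bs k - xs (k + 1)‖ = Metric.infDist (bs k) A := by
    intro k; rw [hxsucc]; exact (hpA (bs k)).2
  have hAle : ∀ k, Metric.infDist (bs k) A ≤ Metric.infDist (xs k) B := by
    intro k
    calc Metric.infDist (bs k) A ≤ dist (bs k) (xs k) := Metric.infDist_le_dist_of_mem (hmemA k)
      _ = ‖xs k - bs k‖ := by rw [dist_comm, dist_eq_norm]
      _ = Metric.infDist (xs k) B := hnormB k
  -- monotonicity of dist to B
  have hmono : ∀ k, Metric.infDist (xs k) B ≤ Metric.infDist x B := by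
    intro k
    induction k with
    | zero => rw [hxs0]
    | succ n ih =>
      calc Metric.infDist (xs (n + 1)) B ≤ dist (xs (n + 1)) (bs n) :=
            Metric.infDist_le_dist_of_mem (hpB (xs n)).1
        _ = ‖bs n - xs (n + 1)‖ := by rw [dist_comm, dist_eq_norm]
        _ = Metric.infDist (bs n) A := hnormA n
        _ ≤ Metric.infDist (xs n) B := hAle n
        _ ≤ Metric.infDist x B := ih
  -- step bound
  have hstep : ∀ k, ‖xs k - xs (k + 1)‖ ≤ 2 * Metric.infDist x B := by
    intro k
    calc ‖xs k - xs (k + 1)‖ ≤ ‖xs k - bs k‖ + ‖bs k - xs (k + 1)‖ := norm_sub_le_norm_sub_add_norm_sub _ _ _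
      _ = Metric.infDist (xs k) B + Metric.infDist (bs k) A := by rw [hnormB, hnormA]
      _ ≤ Metric.infDist (xs k) B + Metric.infDist (xs k) B := by
          have := hAle k; linarith
      _ ≤ 2 * Metric.infDist x B := by have := hmono k; linarith
  -- telescoping
  have htel : ∀ k, ‖x - xs k‖ ≤ k * (2 * Metric.infDist x B) := by
    intro k
    induction k with
    | zero => simp [hxs0]
    | succ n ih =>
      calc ‖x - xs (n + 1)‖ ≤ ‖x - xs n‖ + ‖xs n - xs (n + 1)‖ :=
            norm_sub_le_norm_sub_add_norm_sub _ _ _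
        _ ≤ n * (2 * Metric.infDist x B) + 2 * Metric.infDist x B := add_le_add ih (hstep n)
        _ = (n + 1 : ℕ) * (2 * Metric.infDist x B) := by push_cast; ring
  -- key inequality
  have hkey : Metric.infDist x S ≤ 2 * k₁ * Metric.infDist x B + c * Metric.infDist x S := by
    calc Metric.infDist x S ≤ Metric.infDist (xs k₁) S + dist x (xs k₁) :=
          Metric.infDist_le_infDist_add_dist
      _ ≤ c * Metric.infDist (xs 0) S + k₁ * (2 * Metric.infDist x B) := by
          rw [dist_eq_norm]; exact add_le_add hdec (htel k₁)
      _ = 2 * k₁ * Metric.infDist x B + c * Metric.infDist x S := by rw [hxs0]; ring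
  have hdBnn : (0:ℝ) ≤ Metric.infDist x B := Metric.infDist_nonneg
  have hk₁m' : (k₁ : ℝ) ≤ m := by exact_mod_cast hk₁m
  have hfinal : Metric.infDist x S ≤ 2 * m / (1 - c) * Metric.infDist x B := by
    rw [div_mul_eq_mul_div, le_div_iff₀ (by linarith)]
    nlinarith [hkey]
  calc Metric.infDist x (A ∩ B ∩ Λ) ≤ Metric.infDist x S :=
        Metric.infDist_le_infDist_of_subset hS hSne
    _ ≤ 2 * m / (1 - c) * Metric.infDist x B := hfinal
end

section
/- Let Λ, A, B be closed subsets of E, let x̄ ∈ A ∩ B ∩ Λ, let n ≥ 1 be an integer, c ∈ [0,1), and ρ > 0. Suppose that for every alternating projections sequence (x_k),(b_k) for (A,B) with x₀ ∈ A ∩ B_ρ(x̄) ∩ Λ, with joining sequence (z_k) defined by z_{2k} = x_k and z_{2k+1} = b_k, there exists j ∈ {0,1,…,n−1} such that: z_{2j+k} ∈ Λ for all k ∈ ℕ, ‖z_{2j+k+2} − z_{2j+k+1}‖ ≤ ‖z_{2j+k+1} − z_{2j+k}‖ for all k ∈ ℕ, and ‖z_{2j+2n(k+1)+1} − z_{2j+2n(k+1)}‖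 ≤ c‖z_{2j+2nk+1} − z_{2j+2nk}‖ for all k ∈ ℕ (i.e. the shifted joining sequence is a linear extension of the subsequence (x_{j+nk})_k on Λ with frequency 2n and rate c). Then dist(x, A ∩ B ∩ Λ) ≤ κ·dist(x, B) for all x ∈ A ∩ B_ρ(x̄) ∩ Λ, where κ = 2(2n − 1 − c(n−1))/(1−c); in particular {A,B} is subtransversal at x̄ relative to Λ. -/
/-- If every alternating projections sequence for `(A,B)` starting in
`A ∩ B_ρ(xbar) ∩ Λ`, with joining sequence `(z_k)` (`z_{2k} = x_k`, `z_{2k+1} = b_k`), has a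
shift index `j ∈ {0,…,n−1}` for which the shifted joining sequence stays in `Λ`, has
non-increasing consecutive gaps, and satisfies the `2n`-periodic linear decrease with rate
`c` (i.e. it is a linear extension of `(x_{j+nk})_k` on `Λ` with frequency `2n` and rate
`c`), then `dist(x, A ∩ B ∩ Λ) ≤ κ·dist(x, B)` on `A ∩ B_ρ(xbar) ∩ Λ` with
`κ = 2(2n − 1 − c(n−1))/(1−c)`; in particular `{A,B}` is subtransversal at `xbar`
relative to `Λ`. -/
theorem subtransversality_necessary_for_linear_extendibility_of_subsequences
    {E : Type*} [NormedAddCommGroup E] [InnerProductSpace ℝ E] [FiniteDimensional ℝ E]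
    (Λ A B : Set E) (hΛ : IsClosed Λ) (hA : IsClosed A) (hB : IsClosed B)
    (xbar : E) (hxbar : xbar ∈ A ∩ B ∩ Λ)
    (n : ℕ) (hn : 1 ≤ n) (c ρ : ℝ) (hc0 : 0 ≤ c) (hc1 : c < 1) (hρ : 0 < ρ)
    (hyp : ∀ x b z : ℕ → E,
      (∀ k, b k ∈ projSet B (x k)) → (∀ k, x (k + 1) ∈ projSet A (b k)) →
      (∀ k, z (2 * k) = x k) → (∀ k, z (2 * k + 1) = b k) →
      x 0 ∈ A ∩ Metric.ball xbar ρ ∩ Λ →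
      ∃ j < n,
        (∀ k, z (2 * j + k) ∈ Λ) ∧
        (∀ k, ‖z (2 * j + k + 2) - z (2 * j + k + 1)‖ ≤ ‖z (2 * j + k + 1) - z (2 * j + k)‖) ∧
        (∀ k, ‖z (2 * j + 2 * n * (k + 1) + 1) - z (2 * j + 2 * n * (k + 1))‖ ≤
          c * ‖z (2 * j + 2 * n * k + 1) - z (2 * j + 2 * n * k)‖)) :
    ∀ x ∈ A ∩ Metric.ball xbar ρ ∩ Λ,
      Metric.infDist x (A ∩ B ∩ Λ) ≤
        (2 * (2 * (n : ℝ) - 1 - c * ((n : ℝ) - 1)) / (1 - c)) * Metric.infDist x B := by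
  intro x hx
  have h1c : (0:ℝ) < 1 - c := by linarith
  have hBne : B.Nonempty := ⟨xbar, hxbar.1.2⟩
  have hAne : A.Nonempty := ⟨xbar, hxbar.1.1⟩
  -- choice functions for projections
  have projBex : ∀ y : E, ∃ b, b ∈ projSet B y := by
    intro y
    obtain ⟨b, hbB, hb⟩ := hB.exists_infDist_eq_dist hBne y
    exact ⟨b, hbB, by rw [← dist_eq_norm, hb]⟩
  have projAex : ∀ y : E, ∃ a, a ∈ projSet A y := by
    intro y
    obtain ⟨a, haA, ha⟩ := hA.exists_infDist_eq_dist hAne y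
    exact ⟨a, haA, by rw [← dist_eq_norm, ha]⟩
  choose f hf using projBex
  choose g hg using projAex
  -- the alternating projections sequence
  set X : ℕ → E := fun k => (fun y => g (f y))^[k] x with hX
  have hX0 : X 0 = x := rfl
  have hXsucc : ∀ k, X (k + 1) = g (f (X k)) := by
    intro k
    simp [hX, Function.iterate_succ_apply']
  set b : ℕ → E := fun k => f (X k) with hb
  set z : ℕ → E := fun m => if Even m then X (m / 2) else b (m / 2) with hz
  have hz2 : ∀ k, z (2 * k) = X k := by
    intro k
    simp [hz, Nat.even_iff, Nat.mul_div_cancel_left _ (by norm_num : 0 < 2),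
      Nat.mul_mod_right]
  have hz2' : ∀ k, z (2 * k + 1) = b k := by
    intro k
    have h2 : (2 * k + 1) / 2 = k := by omega
    have h3 : ¬ Even (2 * k + 1) := by simp [Nat.even_iff]
    simp [hz, h3, h2]
  have hbp : ∀ k, b k ∈ projSet B (X k) := fun k => hf (X k)
  have hxp : ∀ k, X (k + 1) ∈ projSet A (b k) := by
    intro k; rw [hXsucc k]; exact hg (f (X k))
  have hXA : ∀ k, X k ∈ A := by
    intro k
    cases k with
    | zero => exact hx.1.1
    | succ k => exact (hxp k).1
  obtain ⟨j, hj, hΛk, _, hdec⟩ := hyp X b z hbp hxp hz2 hz2' hx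
  -- the gap sequence
  set e : ℕ → ℝ := fun m => ‖z (m + 1) - z m‖ with he
  have he_nonneg : ∀ m, 0 ≤ e m := fun m => norm_nonneg _
  -- gaps are nonincreasing
  have hmono : ∀ m, e (m + 1) ≤ e m := by
    intro m
    rcases Nat.even_or_odd m with ⟨k, hk⟩ | ⟨k, hk⟩
    · -- m = 2k : e (2k+1) = dist(b k, A) ≤ ‖b k - X k‖ = e (2k)
      subst hk
      have h1 : e (k + k + 1) = ‖X (k+1) - b k‖ := by
        have : k + k + 1 + 1 = 2 * (k + 1) := by ring
        rw [he]; simp only [this]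
        have : k + k + 1 = 2 * k + 1 := by ring
        rw [hz2 (k+1), this, hz2' k]
      have h2 : e (k + k) = ‖b k - X k‖ := by
        have h3 : k + k + 1 = 2 * k + 1 := by ring
        have h4 : k + k = 2 * k := by ring
        rw [he]; simp only [h3, h4, hz2' k, hz2 k]
      rw [h1, h2, norm_sub_rev]
      calc ‖b k - X (k+1)‖ = Metric.infDist (b k) A := (hxp k).2
        _ ≤ dist (b k) (X k) := Metric.infDist_le_dist_of_mem (hXA k)
        _ = ‖b k - X k‖ := dist_eq_norm _ _
    · -- m = 2k+1 : e (2k+2) = dist(X (k+1), B) ≤ ‖X (k+1) - b k‖ = e (2k+1)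
      subst hk
      have h1 : e (2 * k + 1 + 1) = ‖b (k+1) - X (k+1)‖ := by
        have h3 : 2 * k + 1 + 1 = 2 * (k + 1) := by ring
        have h4 : 2 * k + 1 + 1 + 1 = 2 * (k + 1) + 1 := by ring
        rw [he]; simp only [h4, h3, hz2' (k+1), hz2 (k+1)]
      have h2 : e (2 * k + 1) = ‖X (k+1) - b k‖ := by
        have h3 : 2 * k + 1 + 1 = 2 * (k + 1) := by ring
        rw [he]; simp only [h3, hz2 (k+1), hz2' k]
      rw [h1, h2, norm_sub_rev]
      calc ‖X (k+1) - b (k+1)‖ = Metric.infDist (X (k+1)) B := (hbp (k+1)).2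
        _ ≤ dist (X (k+1)) (b k) := Metric.infDist_le_dist_of_mem (hbp k).1
        _ = ‖X (k+1) - b k‖ := dist_eq_norm _ _
  have hanti : Antitone e := antitone_nat_of_succ_le hmono
  have he_le_e0 : ∀ m, e m ≤ e 0 := fun m => hanti (Nat.zero_le m)
  -- geometric decrease on the subsequence
  have hgeo : ∀ k, e (2 * j + 2 * n * k) ≤ c ^ k * e (2 * j) := by
    intro k
    induction k with
    | zero => simp
    | succ k ih =>
      have := hdec k
      have hd : e (2 * j + 2 * n * (k + 1)) ≤ c * e (2 * j + 2 * n * k) := this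
      calc e (2 * j + 2 * n * (k + 1)) ≤ c * e (2 * j + 2 * n * k) := hd
        _ ≤ c * (c ^ k * e (2 * j)) := by
            exact mul_le_mul_of_nonneg_left ih hc0
        _ = c ^ (k + 1) * e (2 * j) := by ring
  -- partial sums bound
  set K : ℝ := (2 * j : ℝ) * e 0 + (2 * n : ℝ) * (1 - c)⁻¹ * e 0 with hK
  have hblocks : ∀ N : ℕ, ∑ m ∈ Finset.range (2 * j + 2 * n * N), e m ≤
      (2 * j : ℝ) * e 0 + (2 * n : ℝ) * (∑ k ∈ Finset.range N, c ^ k) * e 0 := by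
    intro N
    induction N with
    | zero =>
      simp only [Nat.mul_zero, Nat.add_zero, Finset.range_zero, Finset.sum_empty]
      have : ∑ m ∈ Finset.range (2 * j), e m ≤ ∑ _m ∈ Finset.range (2 * j), e 0 :=
        Finset.sum_le_sum fun m _ => he_le_e0 m
      simp only [Finset.sum_const, Finset.card_range, nsmul_eq_mul] at this
      push_cast at this ⊢
      linarith
    | succ N ih =>
      have hsplit : 2 * j + 2 * n * (N + 1) = (2 * j + 2 * n * N) + 2 * n := by ring
      rw [hsplit, Finset.sum_range_add]
      have hblock : ∑ m ∈ Finset.range (2 * n), e (2 * j + 2 * n * N + m) ≤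
          (2 * n : ℝ) * (c ^ N * e 0) := by
        have : ∀ m ∈ Finset.range (2 * n), e (2 * j + 2 * n * N + m) ≤ c ^ N * e 0 := by
          intro m _
          calc e (2 * j + 2 * n * N + m) ≤ e (2 * j + 2 * n * N) :=
                hanti (Nat.le_add_right _ _)
            _ ≤ c ^ N * e (2 * j) := hgeo N
            _ ≤ c ^ N * e 0 := mul_le_mul_of_nonneg_left (he_le_e0 _) (pow_nonneg hc0 N)
        calc ∑ m ∈ Finset.range (2 * n), e (2 * j + 2 * n * N + m)
            ≤ ∑ _m ∈ Finset.range (2 * n), c ^ N * e 0 := Finset.sum_le_sum this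
          _ = (2 * n : ℝ) * (c ^ N * e 0) := by
              rw [Finset.sum_const, Finset.card_range, nsmul_eq_mul]; push_cast; ring
      rw [Finset.sum_range_succ]
      push_cast
      push_cast at ih hblock
      linarith
  have hgeosum : ∀ N : ℕ, (∑ k ∈ Finset.range N, c ^ k) ≤ (1 - c)⁻¹ := by
    intro N
    calc (∑ k ∈ Finset.range N, c ^ k) ≤ ∑' k : ℕ, c ^ k :=
        Summable.sum_le_tsum _ (fun i _ => pow_nonneg hc0 i) (summable_geometric_of_lt_one hc0 hc1)
      _ = (1 - c)⁻¹ := tsum_geometric_of_lt_one hc0 hc1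
  have hpartial : ∀ N : ℕ, ∑ m ∈ Finset.range N, e m ≤ K := by
    intro N
    have hsub : Finset.range N ⊆ Finset.range (2 * j + 2 * n * N) := by
      apply Finset.range_subset_range.2; nlinarith [hn, Nat.zero_le N]
    calc ∑ m ∈ Finset.range N, e m ≤ ∑ m ∈ Finset.range (2 * j + 2 * n * N), e m :=
        Finset.sum_le_sum_of_subset_of_nonneg hsub fun i _ _ => he_nonneg i
      _ ≤ (2 * j : ℝ) * e 0 + (2 * n : ℝ) * (∑ k ∈ Finset.range N, c ^ k) * e 0 :=
        hblocks N
      _ ≤ K := by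
        rw [hK]
        have h0 : (0:ℝ) ≤ e 0 := he_nonneg 0
        have h2n : (0:ℝ) ≤ 2 * (n:ℝ) := by positivity
        have := mul_le_mul_of_nonneg_right
          (mul_le_mul_of_nonneg_left (hgeosum N) h2n) h0
        linarith
  -- summability and convergence
  have hsummable : Summable e := summable_of_sum_range_le he_nonneg hpartial
  have hdistz : ∀ m, dist (z m) (z (m + 1)) ≤ e m := by
    intro m; rw [dist_eq_norm, norm_sub_rev]
  have hcauchy : CauchySeq z := by
    apply cauchySeq_of_summable_dist
    apply Summable.of_nonneg_of_le (fun m => dist_nonneg) hdistz hsummable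
  obtain ⟨zlim, hzlim⟩ := cauchySeq_tendsto_of_complete hcauchy
  -- the limit is in A ∩ B ∩ Λ
  have htwok : Filter.Tendsto (fun k : ℕ => 2 * k) Filter.atTop Filter.atTop :=
    Filter.tendsto_atTop_atTop.2 fun m => ⟨m, fun a ha => by omega⟩
  have htwok1 : Filter.Tendsto (fun k : ℕ => 2 * k + 1) Filter.atTop Filter.atTop :=
    Filter.tendsto_atTop_atTop.2 fun m => ⟨m, fun a ha => by omega⟩
  have hshift : Filter.Tendsto (fun k : ℕ => 2 * j + k) Filter.atTop Filter.atTop :=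
    Filter.tendsto_atTop_atTop.2 fun m => ⟨m, fun a ha => by omega⟩
  have hmemA : zlim ∈ A := by
    apply hA.mem_of_tendsto (hzlim.comp htwok)
    filter_upwards with k
    simp only [Function.comp_apply, hz2 k]
    exact hXA k
  have hmemB : zlim ∈ B := by
    apply hB.mem_of_tendsto (hzlim.comp htwok1)
    filter_upwards with k
    simp only [Function.comp_apply, hz2' k]
    exact (hbp k).1
  have hmemΛ : zlim ∈ Λ := by
    apply hΛ.mem_of_tendsto (hzlim.comp hshift)
    filter_upwards with k
    exact hΛk k
  -- final estimate
  have hd0 : dist (z 0) zlim ≤ ∑' m, e m :=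
    dist_le_tsum_of_dist_le_of_tendsto₀ e hdistz hsummable hzlim
  have htsum : ∑' m, e m ≤ K := Summable.tsum_le_of_sum_range_le hsummable hpartial
  have hz0 : z 0 = x := by
    have := hz2 0
    simpa [hX0] using this
  have he0 : e 0 = Metric.infDist x B := by
    have h1 : z 1 = b 0 := by simpa using hz2' 0
    rw [he]
    simp only [Nat.zero_add, h1, hz0]
    have := (hbp 0).2
    rw [hX0] at this
    rw [norm_sub_rev]
    exact this
  have hfinal : Metric.infDist x (A ∩ B ∩ Λ) ≤ K := by
    calc Metric.infDist x (A ∩ B ∩ Λ) ≤ dist x zlim :=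
        Metric.infDist_le_dist_of_mem ⟨⟨hmemA, hmemB⟩, hmemΛ⟩
      _ = dist (z 0) zlim := by rw [hz0]
      _ ≤ ∑' m, e m := hd0
      _ ≤ K := htsum
  -- compare the constants
  have hKle : K ≤ (2 * (2 * (n : ℝ) - 1 - c * ((n : ℝ) - 1)) / (1 - c)) *
      Metric.infDist x B := by
    rw [hK, he0]
    have hdB : (0:ℝ) ≤ Metric.infDist x B := Metric.infDist_nonneg
    have hjn : (j : ℝ) ≤ (n : ℝ) - 1 := by
      have h : ((j : ℝ) + 1) ≤ (n : ℝ) := by exact_mod_cast hj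
      linarith
    have hkey : (2 * j : ℝ) + (2 * n : ℝ) * (1 - c)⁻¹ ≤
        2 * (2 * (n : ℝ) - 1 - c * ((n : ℝ) - 1)) / (1 - c) := by
      rw [le_div_iff₀ h1c]
      have hinv : (1 - c)⁻¹ * (1 - c) = 1 := inv_mul_cancel₀ (ne_of_gt h1c)
      have h2 : 2 * (n:ℝ) * ((1 - c)⁻¹ * (1 - c)) = 2 * (n:ℝ) := by rw [hinv]; ring
      have hprod : (0:ℝ) ≤ ((n:ℝ) - 1 - j) * (1 - c) :=
        mul_nonneg (by linarith) (by linarith)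
      nlinarith [h2, hprod]
    calc (2 * j : ℝ) * Metric.infDist x B + (2 * n : ℝ) * (1 - c)⁻¹ * Metric.infDist x B
        = ((2 * j : ℝ) + (2 * n : ℝ) * (1 - c)⁻¹) * Metric.infDist x B := by ring
      _ ≤ (2 * (2 * (n : ℝ) - 1 - c * ((n : ℝ) - 1)) / (1 - c)) * Metric.infDist x B :=
        mul_le_mul_of_nonneg_right hkey hdB
  exact le_trans hfinal hKle
end

section
/- Let A and B be nonempty closed convex subsets of E. Then for every x ∈ A, ‖P_B(P_A(P_B x)) − P_A(P_B x)‖ · ‖P_B x − x‖ ≥ ‖P_A(P_B x) − P_B x‖². -/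
open RealInnerProductSpace

private lemma proj_char {E : Type*} [NormedAddCommGroup E] [InnerProductSpace ℝ E]
    {K : Set E} (hK : Convex ℝ K) {u v : E} (hv : v ∈ K)
    (h : ‖u - v‖ = Metric.infDist u K) : ∀ w ∈ K, ⟪u - v, w - v⟫ ≤ 0 := by
  rw [Metric.infDist_eq_iInf] at h
  simp_rw [dist_eq_norm] at h
  exact (norm_eq_iInf_iff_real_inner_le_zero hK hv).mp h

/-- **non-decreasing rate lemma.** For the metric projections `PA`, `PB`
onto nonempty closed convex sets `A`, `B` and any `x ∈ A`,
`‖PB(PA(PB x)) − PA(PB x)‖·‖PB x − x‖ ≥ ‖PA(PB x) − PB x‖²`. -/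
theorem alternating_projections_nondecreasing_rate
    {E : Type*} [NormedAddCommGroup E] [InnerProductSpace ℝ E] [FiniteDimensional ℝ E]
    (A B : Set E) (hAne : A.Nonempty) (hAc : IsClosed A) (hAconv : Convex ℝ A)
    (hBne : B.Nonempty) (hBc : IsClosed B) (hBconv : Convex ℝ B)
    (PA PB : E → E)
    (hPA : ∀ y, PA y ∈ A ∧ ‖y - PA y‖ = Metric.infDist y A)
    (hPB : ∀ y, PB y ∈ B ∧ ‖y - PB y‖ = Metric.infDist y B) :
    ∀ x ∈ A,
      ‖PB (PA (PB x)) - PA (PB x)‖ * ‖PB x - x‖ ≥ ‖PA (PB x) - PB x‖ ^ 2 := by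
  intro x hx
  set y := PB x with hy
  set a := PA y with ha
  set b := PB a with hb
  have hyB : y ∈ B := (hPB x).1
  have haA : a ∈ A := (hPA y).1
  have hbB : b ∈ B := (hPB a).1
  -- projection characterizations
  have h1 : ⟪x - y, b - y⟫ ≤ 0 := proj_char hBconv hyB (hPB x).2 b hbB
  have h2 : ⟪y - a, x - a⟫ ≤ 0 := proj_char hAconv haA (hPA y).2 x hx
  have h3 : ⟪a - b, y - b⟫ ≤ 0 := proj_char hBconv hbB (hPB a).2 y hyB
  -- key: ⟪a - y, x - y⟫ ≥ ‖a - y‖²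
  have key1 : ‖a - y‖ ^ 2 ≤ ⟪a - y, x - y⟫ := by
    have : ⟪a - y, x - y⟫ = -⟪y - a, x - a⟫ + ‖a - y‖ ^ 2 := by
      rw [← real_inner_self_eq_norm_sq]
      simp only [inner_sub_left, inner_sub_right]
      ring
    linarith
  -- ⟪y - b, x - y⟫ ≥ 0
  have key2 : 0 ≤ ⟪y - b, x - y⟫ := by
    have : ⟪y - b, x - y⟫ = -⟪x - y, b - y⟫ := by
      simp only [inner_sub_left, inner_sub_right, real_inner_comm]
      ring
    linarith
  have key3 : ‖a - y‖ ^ 2 ≤ ⟪a - b, x - y⟫ := by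
    have : ⟪a - b, x - y⟫ = ⟪a - y, x - y⟫ + ⟪y - b, x - y⟫ := by
      simp only [inner_sub_left, inner_sub_right]; ring
    linarith
  have cs : ⟪a - b, x - y⟫ ≤ ‖a - b‖ * ‖x - y‖ := real_inner_le_norm _ _
  have hnorm1 : ‖b - a‖ = ‖a - b‖ := norm_sub_rev _ _
  have hnorm2 : ‖y - x‖ = ‖x - y‖ := norm_sub_rev _ _
  have hnorm3 : ‖a - y‖ = ‖PA (PB x) - PB x‖ := rfl
  calc ‖PA (PB x) - PB x‖ ^ 2 = ‖a - y‖ ^ 2 := rfl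
    _ ≤ ‖a - b‖ * ‖x - y‖ := le_trans key3 cs
    _ = ‖PB (PA (PB x)) - PA (PB x)‖ * ‖PB x - x‖ := by rw [← hnorm1, ← hnorm2]
end

section
/- Let A and B be nonempty closed convex subsets of E with A ∩ B ≠ ∅, and let (x_k)_{k∈ℕ} be the alternating projections sequence x_{k+1} = P_A(P_B x_k) with x₀ ∈ A. If x₁ ∉ A ∩ B, then x₀ ∉ B, 0 < ‖x₁ − P_B x₀‖ < ‖P_B x₀ − x₀‖, and, setting c := (‖x₁ − P_B x₀‖ / ‖P_B x₀ − x₀‖)² ∈ (0,1), one has dist(x_k, B) ≥ c^k · dist(x₀, B) > 0 for all k ∈ ℕ; in particular x_k ∉ A ∩ B for every k ∈ ℕ. Thus either the alternating projections method finds a point of A ∩ B after one iteration, or it never reaches A ∩ B after any finite number of iterations. -/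
open Metric RealInnerProductSpace

/-- Key geometric inequality for alternating projections. -/
lemma ap_key_lemma {E : Type*} [NormedAddCommGroup E] [InnerProductSpace ℝ E]
    (D : Set E) (hDne : D.Nonempty) (u p q : E)
    (hvar1 : ∀ w ∈ D, ⟪u - p, w - p⟫ ≤ 0)
    (hvar2 : ⟪p - q, u - q⟫ ≤ 0) :
    ‖q - p‖ ^ 2 ≤ Metric.infDist q D * ‖u - p‖ := by
  have hpt : ∀ w ∈ D, ‖q - p‖ ^ 2 ≤ ‖u - p‖ * dist q w := by
    intro w hw
    have h1 : (0 : ℝ) ≤ ⟪u - q, q - p⟫ := by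
      have heq : ⟪u - q, q - p⟫ = - ⟪p - q, u - q⟫ := by
        calc ⟪u - q, q - p⟫ = ⟪q - p, u - q⟫ := real_inner_comm _ _
        _ = - ⟪p - q, u - q⟫ := by
            rw [show q - p = -(p - q) from by abel, inner_neg_left]
      rw [heq]; linarith
    have h2 : ‖q - p‖ ^ 2 ≤ ⟪u - p, q - p⟫ := by
      have hsplit : ⟪u - p, q - p⟫ = ⟪u - q, q - p⟫ + ⟪q - p, q - p⟫ := by
        rw [← inner_add_left]; norm_num
      rw [hsplit, real_inner_self_eq_norm_sq]
      linarith
    have h3 : ‖q - p‖ ^ 2 ≤ ⟪u - p, q - w⟫ := by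
      have hsplit : ⟪u - p, q - w⟫ = ⟪u - p, q - p⟫ + ⟪u - p, p - w⟫ := by
        rw [← inner_add_right]; norm_num
      have h4 : (0 : ℝ) ≤ ⟪u - p, p - w⟫ := by
        have heq : ⟪u - p, p - w⟫ = - ⟪u - p, w - p⟫ := by
          rw [show p - w = -(w - p) from by abel, inner_neg_right]
        rw [heq]; linarith [hvar1 w hw]
      rw [hsplit]; linarith
    have hcs : ⟪u - p, q - w⟫ ≤ ‖u - p‖ * ‖q - w‖ := real_inner_le_norm _ _
    rw [dist_eq_norm]
    linarith
  rcases eq_or_lt_of_le (norm_nonneg (u - p)) with h0 | h0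
  · obtain ⟨w₀, hw₀⟩ := hDne
    have hw := hpt w₀ hw₀
    rw [← h0] at hw ⊢
    nlinarith [Metric.infDist_nonneg (x := q) (s := D)]
  · have hdiv : ‖q - p‖ ^ 2 / ‖u - p‖ ≤ Metric.infDist q D := by
      rw [Metric.infDist_eq_iInf]
      haveI : Nonempty D := hDne.to_subtype
      refine le_ciInf fun w => ?_
      rw [div_le_iff₀ h0, mul_comm]
      exact hpt w w.2
    calc ‖q - p‖ ^ 2 = ‖q - p‖ ^ 2 / ‖u - p‖ * ‖u - p‖ := by field_simp
    _ ≤ Metric.infDist q D * ‖u - p‖ := mul_le_mul_of_nonneg_right hdiv h0.le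

set_option maxHeartbeats 1600000 in
/-- **lower bound of complexity.** For alternating projections between
nonempty closed convex sets `A`, `B` with `A ∩ B ≠ ∅`, started at `x₀ ∈ A`: if
`x₁ ∉ A ∩ B` then `x₀ ∉ B`, `0 < ‖x₁ − PB x₀‖ < ‖PB x₀ − x₀‖`, and with
`c = (‖x₁ − PB x₀‖/‖PB x₀ − x₀‖)²` one has `dist(x_k, B) ≥ c^k·dist(x₀, B) > 0` for all
`k`, so `x_k ∉ A ∩ B` for every `k`. Thus the method either finds a point of `A ∩ B` after
one iteration or never reaches `A ∩ B`. -/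
theorem alternating_projections_one_step_or_never
    {E : Type*} [NormedAddCommGroup E] [InnerProductSpace ℝ E] [FiniteDimensional ℝ E]
    (A B : Set E) (hAne : A.Nonempty) (hAc : IsClosed A) (hAconv : Convex ℝ A)
    (hBne : B.Nonempty) (hBc : IsClosed B) (hBconv : Convex ℝ B)
    (hABne : (A ∩ B).Nonempty)
    (PA PB : E → E)
    (hPA : ∀ y, PA y ∈ A ∧ ‖y - PA y‖ = Metric.infDist y A)
    (hPB : ∀ y, PB y ∈ B ∧ ‖y - PB y‖ = Metric.infDist y B)
    (x : ℕ → E) (hx0 : x 0 ∈ A) (hrec : ∀ k, x (k + 1) = PA (PB (x k)))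
    (hx1 : x 1 ∉ A ∩ B) :
    x 0 ∉ B ∧
    0 < ‖x 1 - PB (x 0)‖ ∧
    ‖x 1 - PB (x 0)‖ < ‖PB (x 0) - x 0‖ ∧
    (0 < (‖x 1 - PB (x 0)‖ / ‖PB (x 0) - x 0‖) ^ 2 ∧
      (‖x 1 - PB (x 0)‖ / ‖PB (x 0) - x 0‖) ^ 2 < 1) ∧
    (∀ k, ((‖x 1 - PB (x 0)‖ / ‖PB (x 0) - x 0‖) ^ 2) ^ k * Metric.infDist (x 0) B ≤
        Metric.infDist (x k) B ∧
      0 < Metric.infDist (x k) B ∧ x k ∉ A ∩ B) := by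
  -- variational characterizations of the projections
  have varA : ∀ y, ∀ w ∈ A, ⟪y - PA y, w - PA y⟫ ≤ 0 := by
    intro y
    have h := (hPA y).2
    rw [Metric.infDist_eq_iInf] at h
    have h' : ‖y - PA y‖ = ⨅ w : A, ‖y - w‖ := by
      rw [h]; exact iInf_congr fun w => dist_eq_norm _ _
    exact (norm_eq_iInf_iff_real_inner_le_zero hAconv (hPA y).1).mp h'
  have varB : ∀ y, ∀ w ∈ B, ⟪y - PB y, w - PB y⟫ ≤ 0 := by
    intro y
    have h := (hPB y).2
    rw [Metric.infDist_eq_iInf] at h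
    have h' : ‖y - PB y‖ = ⨅ w : B, ‖y - w‖ := by
      rw [h]; exact iInf_congr fun w => dist_eq_norm _ _
    exact (norm_eq_iInf_iff_real_inner_le_zero hBconv (hPB y).1).mp h'
  -- every iterate lies in A
  have hxA : ∀ k, x k ∈ A := by
    intro k
    cases k with
    | zero => exact hx0
    | succ n => rw [hrec]; exact (hPA _).1
  -- abbreviations (plain definitions, everything unfolds by `rfl`)
  let b : ℕ → E := fun k => PB (x k)
  let d : ℕ → ℝ := fun k => Metric.infDist (x k) B
  let e : ℕ → ℝ := fun k => ‖x (k + 1) - b k‖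
  have hbB : ∀ k, b k ∈ B := fun k => (hPB (x k)).1
  have hrec' : ∀ k, x (k + 1) = PA (b k) := fun k => hrec k
  have hdk : ∀ k, ‖x k - b k‖ = d k := fun k => (hPB (x k)).2
  have hek : ∀ k, e k = Metric.infDist (b k) A := by
    intro k
    show ‖x (k + 1) - b k‖ = _
    rw [hrec' k, norm_sub_rev]
    exact (hPA (b k)).2
  -- x 0 ∉ B
  have hx0B : x 0 ∉ B := by
    intro hmem
    apply hx1
    have h1 : PB (x 0) = x 0 := by
      have hz : ‖x 0 - PB (x 0)‖ = 0 := by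
        rw [(hPB (x 0)).2]; exact Metric.infDist_zero_of_mem hmem
      exact (norm_sub_eq_zero_iff.mp hz).symm
    have h2 : x 1 = x 0 := by
      rw [hrec 0, h1]
      have hz : ‖x 0 - PA (x 0)‖ = 0 := by
        rw [(hPA (x 0)).2]; exact Metric.infDist_zero_of_mem hx0
      exact (norm_sub_eq_zero_iff.mp hz).symm
    rw [h2]; exact ⟨hx0, hmem⟩
  have hd0 : 0 < d 0 := (hBc.notMem_iff_infDist_pos hBne).mp hx0B
  -- 0 < e 0
  have he0 : 0 < e 0 := by
    rw [show e 0 = ‖x 1 - b 0‖ from rfl, norm_pos_iff, sub_ne_zero]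
    intro hEq
    exact hx1 ⟨hxA 1, hEq ▸ hbB 0⟩
  -- e 0 < d 0 (strict)
  have he0d0 : e 0 < d 0 := by
    have hle : e 0 ≤ d 0 := by
      rw [hek 0, ← hdk 0, norm_sub_rev]
      calc Metric.infDist (b 0) A ≤ dist (b 0) (x 0) := Metric.infDist_le_dist_of_mem hx0
      _ = ‖b 0 - x 0‖ := dist_eq_norm _ _
    rcases lt_or_eq_of_le hle with h | h
    · exact h
    exfalso
    have hvarA0 : ⟪b 0 - x 1, x 0 - x 1⟫ ≤ 0 := by
      have hv := varA (b 0) (x 0) hx0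
      rw [← hrec' 0] at hv
      exact hv
    have hexp : ‖b 0 - x 0‖ ^ 2 =
        ‖b 0 - x 1‖ ^ 2 + 2 * ⟪b 0 - x 1, x 1 - x 0⟫ + ‖x 1 - x 0‖ ^ 2 := by
      rw [show b 0 - x 0 = (b 0 - x 1) + (x 1 - x 0) from by abel, norm_add_sq_real]
    have hinn : (0 : ℝ) ≤ ⟪b 0 - x 1, x 1 - x 0⟫ := by
      have heq : ⟪b 0 - x 1, x 1 - x 0⟫ = - ⟪b 0 - x 1, x 0 - x 1⟫ := by
        rw [show x 1 - x 0 = -(x 0 - x 1) from by abel, inner_neg_right]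
      rw [heq]; linarith
    have hnd : ‖b 0 - x 0‖ = d 0 := by rw [norm_sub_rev]; exact hdk 0
    have hne' : ‖b 0 - x 1‖ = e 0 := norm_sub_rev _ _
    have hx10 : ‖x 1 - x 0‖ ^ 2 ≤ 0 := by nlinarith
    have hx1x0 : x 1 = x 0 := by
      have hz : ‖x 1 - x 0‖ = 0 := by nlinarith [norm_nonneg (x 1 - x 0)]
      exact norm_sub_eq_zero_iff.mp hz
    obtain ⟨z, hzA, hzB⟩ := hABne
    have h1 : ⟪b 0 - x 0, z - x 0⟫ ≤ 0 := by
      have hv := varA (b 0) z hzA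
      rw [← hrec' 0, hx1x0] at hv
      exact hv
    have h2 : ⟪x 0 - b 0, z - b 0⟫ ≤ 0 := varB (x 0) z hzB
    have h3 : (0 : ℝ) ≤ ⟪b 0 - x 0, z - b 0⟫ := by
      have heq : ⟪b 0 - x 0, z - b 0⟫ = - ⟪x 0 - b 0, z - b 0⟫ := by
        rw [show b 0 - x 0 = -(x 0 - b 0) from by abel, inner_neg_left]
      rw [heq]; linarith
    have h4 : ⟪b 0 - x 0, b 0 - x 0⟫ ≤ 0 := by
      have heq : ⟪b 0 - x 0, b 0 - x 0⟫ =
          ⟪b 0 - x 0, z - x 0⟫ - ⟪b 0 - x 0, z - b 0⟫ := by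
        rw [← inner_sub_right]
        congr 1
        abel
      rw [heq]; linarith
    have h5 : ‖b 0 - x 0‖ ^ 2 ≤ 0 := by rw [← real_inner_self_eq_norm_sq]; exact h4
    nlinarith
  have hE0 : ‖x 1 - PB (x 0)‖ = e 0 := rfl
  have hD0 : ‖PB (x 0) - x 0‖ = d 0 := by
    rw [norm_sub_rev]; exact hdk 0
  set c : ℝ := (‖x 1 - PB (x 0)‖ / ‖PB (x 0) - x 0‖) ^ 2 with hc
  have hc_eq : c = (e 0 / d 0) ^ 2 := by rw [hc, hE0, hD0]
  have hc_pos : 0 < c := by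
    rw [hc_eq]; positivity
  have hc_lt1 : c < 1 := by
    rw [hc_eq]
    have h1 : e 0 / d 0 < 1 := (div_lt_one hd0).mpr he0d0
    have hnn : 0 ≤ e 0 / d 0 := by positivity
    nlinarith
  -- key inequalities
  have key1 : ∀ k, e k ^ 2 ≤ d (k + 1) * d k := by
    intro k
    have hmain := ap_key_lemma B hBne (x k) (b k) (x (k + 1))
      (varB (x k)) (by
        have hv := varA (b k) (x k) (hxA k)
        rw [← hrec' k] at hv
        exact hv)
    rw [hdk k] at hmain
    exact hmain
  have key2 : ∀ k, d (k + 1) ^ 2 ≤ e (k + 1) * e k := by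
    intro k
    have hmain := ap_key_lemma A hAne (b k) (x (k + 1)) (b (k + 1))
      (by
        intro w hw
        have hv := varA (b k) w hw
        rw [← hrec' k] at hv
        exact hv)
      (varB (x (k + 1)) (b k) (hbB k))
    have h1 : ‖b (k + 1) - x (k + 1)‖ = d (k + 1) := by rw [norm_sub_rev]; exact hdk (k + 1)
    have h2 : ‖b k - x (k + 1)‖ = e k := norm_sub_rev _ _
    rw [h1, h2, ← hek (k + 1)] at hmain
    exact hmain
  -- main induction
  have main : ∀ k, 0 < d k ∧ 0 < e k ∧ e 0 * d k ≤ e k * d 0 ∧ c ^ k * d 0 ≤ d k := by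
    intro k
    induction k with
    | zero => exact ⟨hd0, he0, le_refl _, by simp⟩
    | succ n ih =>
      obtain ⟨hdn, hen, hratio, hgeo⟩ := ih
      have k1 := key1 n
      have k2 := key2 n
      have hdn1 : 0 < d (n + 1) := by nlinarith
      have hen1 : 0 < e (n + 1) := by nlinarith
      have step1 : d (n + 1) * e n ≤ e (n + 1) * d n := by
        nlinarith [mul_le_mul_of_nonneg_left k1 hdn1.le,
          mul_le_mul_of_nonneg_left k2 hdn.le]
      have hratio1 : e 0 * d (n + 1) ≤ e (n + 1) * d 0 := by
        have hmul : (d (n + 1) * e n) * (e 0 * d n) ≤ (e (n + 1) * d n) * (e n * d 0) :=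
          mul_le_mul step1 hratio (by positivity) (by positivity)
        nlinarith [mul_pos hen hdn]
      have hstep : c * d n ≤ d (n + 1) := by
        rw [hc_eq, div_pow, div_mul_eq_mul_div, div_le_iff₀ (by positivity)]
        have hsq : (e 0 * d n) ^ 2 ≤ (e n * d 0) ^ 2 := by
          have := mul_self_le_mul_self (by positivity : (0:ℝ) ≤ e 0 * d n) hratio
          nlinarith [this]
        nlinarith [mul_le_mul_of_nonneg_right k1 (sq_nonneg (d 0))]
      have hgeo1 : c ^ (n + 1) * d 0 ≤ d (n + 1) := by
        calc c ^ (n + 1) * d 0 = c * (c ^ n * d 0) := by ring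
        _ ≤ c * d n := mul_le_mul_of_nonneg_left hgeo hc_pos.le
        _ ≤ d (n + 1) := hstep
      exact ⟨hdn1, hen1, hratio1, hgeo1⟩
  refine ⟨hx0B, by rw [hE0]; exact he0, by rw [hE0, hD0]; exact he0d0, ⟨hc_pos, hc_lt1⟩, ?_⟩
  intro k
  obtain ⟨hdkpos, _, _, hgeo⟩ := main k
  refine ⟨hgeo, hdkpos, ?_⟩
  rintro ⟨-, hkB⟩
  have hz : d k = 0 := Metric.infDist_zero_of_mem hkB
  linarith
end

section
/- Let A and B be nonempty closed convex subsets of E with A ∩ B ≠ ∅. Suppose there exists c ∈ [0,1) such that for every x₀ ∈ E the alternating projections sequence x_{k+1} = P_A(P_B x_k) eventually converges R-linearly with rate c to a point of A ∩ B: there exist x̃ ∈ A ∩ B, γ > 0 and p ∈ ℕ with ‖x_k − x̃‖ ≤ γ·c^k for all k ≥ p. Then the collection {A,B} is globally subtransversal with constant 1/(1−c): dist(x, A ∩ B) ≤ (1/(1−c))·dist(x, B) for all x ∈ A. -/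
open Metric Filter Finset
open scoped RealInnerProductSpace Topology

section Aux

variable {E : Type*} [NormedAddCommGroup E] [InnerProductSpace ℝ E]

/-- Characterization of the metric projection onto a convex set. -/
lemma projChar {C : Set E} (hC : Convex ℝ C) {y q : E}
    (hq1 : q ∈ C) (hq2 : ‖y - q‖ = Metric.infDist y C) {w : E} (hw : w ∈ C) :
    ⟪y - q, w - q⟫ ≤ 0 := by
  have h1 : ‖y - q‖ = ⨅ w : C, ‖y - w‖ := by
    rw [hq2, Metric.infDist_eq_iInf]
    congr 1
    ext w
    exact dist_eq_norm y w
  exact (norm_eq_iInf_iff_real_inner_le_zero hC hq1).mp h1 w hw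

/-- The projection of a member is itself. -/
lemma projMemSelf {C : Set E} {P : E → E}
    (hP : ∀ y, P y ∈ C ∧ ‖y - P y‖ = Metric.infDist y C) {x : E} (hx : x ∈ C) :
    P x = x := by
  have h := (hP x).2
  rw [Metric.infDist_zero_of_mem hx] at h
  have := norm_eq_zero.mp h
  have := sub_eq_zero.mp this
  exact this.symm

/-- Metric projections onto convex sets are nonexpansive. -/
lemma projNonexpansive {C : Set E} (hC : Convex ℝ C) {P : E → E}
    (hP : ∀ y, P y ∈ C ∧ ‖y - P y‖ = Metric.infDist y C) (u v : E) :
    ‖P u - P v‖ ≤ ‖u - v‖ := by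
  have h1 : ⟪u - P u, P v - P u⟫ ≤ 0 := projChar hC (hP u).1 (hP u).2 (hP v).1
  have h2 : ⟪v - P v, P u - P v⟫ ≤ 0 := projChar hC (hP v).1 (hP v).2 (hP u).1
  have hid : ⟪u - v, P u - P v⟫
      = ‖P u - P v‖ ^ 2 - ⟪u - P u, P v - P u⟫ - ⟪v - P v, P u - P v⟫ := by
    have e1 : (u - v : E) = (u - P u) - (v - P v) + (P u - P v) := by abel
    rw [e1, inner_add_left, inner_sub_left, real_inner_self_eq_norm_sq]
    have e2 : ⟪u - P u, P u - P v⟫ = - ⟪u - P u, P v - P u⟫ := by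
      rw [show (P u - P v : E) = -(P v - P u) by abel, inner_neg_right]
    have e3 : ⟪v - P v, P u - P v⟫ = ⟪v - P v, P u - P v⟫ := rfl
    rw [e2]; ring
  have h3 : ‖P u - P v‖ ^ 2 ≤ ⟪u - v, P u - P v⟫ := by rw [hid]; linarith
  have h4 : ⟪u - v, P u - P v⟫ ≤ ‖u - v‖ * ‖P u - P v‖ := real_inner_le_norm _ _
  rcases eq_or_lt_of_le (norm_nonneg (P u - P v)) with h0 | h0
  · rw [← h0]; exact norm_nonneg _
  · have := le_trans h3 h4
    rw [pow_two] at this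
    exact le_of_mul_le_mul_right (by linarith [this]) h0

/-- Key geometric lemma: if `z ∈ C`, `y` is the projection of `z` on `D` and `x` is the
projection of `y` on `C`, then `dist(y,C)² ≤ dist(z,D) · dist(x,D)`. -/
lemma keyLemma {C D : Set E} (hC : Convex ℝ C) (hD : Convex ℝ D)
    {z y x : E} (hz : z ∈ C)
    (hy1 : y ∈ D) (hy2 : ‖z - y‖ = Metric.infDist z D)
    (hx1 : x ∈ C) (hx2 : ‖y - x‖ = Metric.infDist y C) :
    Metric.infDist y C ^ 2 ≤ Metric.infDist z D * Metric.infDist x D := by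
  have hmain : ∀ b ∈ D, ‖y - x‖ ^ 2 ≤ ‖z - y‖ * ‖x - b‖ := by
    intro b hb
    have hα : ⟪z - y, b - y⟫ ≤ 0 := projChar hD hy1 hy2 hb
    have hβ : ⟪y - x, z - x⟫ ≤ 0 := projChar hC hx1 hx2 hz
    have hid : ⟪z - y, x - b⟫
        = ‖y - x‖ ^ 2 - ⟪y - x, z - x⟫ - ⟪z - y, b - y⟫ := by
      have e1 : (x - b : E) = (x - y) + (y - b) := by abel
      rw [e1, inner_add_right]
      have e2 : ⟪z - y, x - y⟫ = ‖y - x‖ ^ 2 - ⟪y - x, z - x⟫ := by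
        have e3 : (z - y : E) = -(y - x) + (z - x) := by abel
        rw [e3, inner_add_left, inner_neg_left]
        have e4 : ⟪y - x, x - y⟫ = - ⟪y - x, y - x⟫ := by
          rw [show (x - y : E) = -(y - x) by abel, inner_neg_right]
        have e5 : ⟪z - x, x - y⟫ = - ⟪y - x, z - x⟫ := by
          rw [show (x - y : E) = -(y - x) by abel, inner_neg_right]
          exact congrArg Neg.neg (real_inner_comm _ _)
        rw [e4, e5, real_inner_self_eq_norm_sq]; ring
      have e6 : ⟪z - y, y - b⟫ = - ⟪z - y, b - y⟫ := by
        rw [show (y - b : E) = -(b - y) by abel, inner_neg_right]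
      rw [e2, e6]; ring
    have h1 : ‖y - x‖ ^ 2 ≤ ⟪z - y, x - b⟫ := by rw [hid]; linarith
    exact h1.trans (real_inner_le_norm _ _)
  rw [← hx2, ← hy2]
  rcases eq_or_lt_of_le (norm_nonneg (z - y)) with h0 | h0
  · -- z = y, so y ∈ C ∩ D and ‖y - x‖ = 0
    have hby := hmain y hy1
    rw [← h0, zero_mul] at hby
    have : ‖y - x‖ ^ 2 = 0 := le_antisymm hby (sq_nonneg _)
    rw [pow_eq_zero_iff (by norm_num) ] at this
    rw [this]
    rw [← h0]
    simp [Metric.infDist_nonneg]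
  · -- ‖z - y‖ > 0
    have hD_ne : D.Nonempty := ⟨y, hy1⟩
    have : ‖y - x‖ ^ 2 / ‖z - y‖ ≤ Metric.infDist x D := by
      rw [Metric.infDist_eq_iInf]
      haveI : Nonempty ↥D := hD_ne.to_subtype
      apply le_ciInf
      intro b
      rw [div_le_iff₀ h0, dist_eq_norm]
      calc ‖y - x‖ ^ 2 ≤ ‖z - y‖ * ‖x - ↑b‖ := hmain b b.2
        _ = ‖x - ↑b‖ * ‖z - y‖ := by ring
    calc ‖y - x‖ ^ 2 = (‖y - x‖ ^ 2 / ‖z - y‖) * ‖z - y‖ := by field_simp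
      _ ≤ Metric.infDist x D * ‖z - y‖ :=
          mul_le_mul_of_nonneg_right this (norm_nonneg _)
      _ = ‖z - y‖ * Metric.infDist x D := by ring

end Aux

/-- If every alternating projections sequence between the nonempty closed
convex sets `A`, `B` (with `A ∩ B ≠ ∅`) eventually converges R-linearly with rate `c` to a
point of `A ∩ B`, then `{A,B}` is globally subtransversal with constant `1/(1−c)`:
`dist(x, A ∩ B) ≤ (1/(1−c))·dist(x, B)` for all `x ∈ A`. -/
theorem global_subtransversality_necessary_for_eventual_Rlinear_convergence_convex
    {E : Type*} [NormedAddCommGroup E] [InnerProductSpace ℝ E] [FiniteDimensional ℝ E]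
    (A B : Set E) (hAne : A.Nonempty) (hAc : IsClosed A) (hAconv : Convex ℝ A)
    (hBne : B.Nonempty) (hBc : IsClosed B) (hBconv : Convex ℝ B)
    (hABne : (A ∩ B).Nonempty)
    (PA PB : E → E)
    (hPA : ∀ y, PA y ∈ A ∧ ‖y - PA y‖ = Metric.infDist y A)
    (hPB : ∀ y, PB y ∈ B ∧ ‖y - PB y‖ = Metric.infDist y B)
    (c : ℝ) (hc0 : 0 ≤ c) (hc1 : c < 1)
    (hconv : ∀ x : ℕ → E, (∀ k, x (k + 1) = PA (PB (x k))) →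
      ∃ xlim ∈ A ∩ B, ∃ γ > (0 : ℝ), ∃ p : ℕ, ∀ k ≥ p, ‖x k - xlim‖ ≤ γ * c ^ k) :
    ∀ x ∈ A, Metric.infDist x (A ∩ B) ≤ (1 / (1 - c)) * Metric.infDist x B := by
  intro x hxA
  -- the alternating projections sequence from x
  set xs : ℕ → E := fun k => Nat.rec x (fun _ xk => PA (PB xk)) k with hxs
  have hrec : ∀ k, xs (k + 1) = PA (PB (xs k)) := fun _ => rfl
  obtain ⟨xlim, hxlim, γ, hγ, p, hbound⟩ := hconv xs hrec
  set d : ℕ → ℝ := fun k => Metric.infDist (xs k) B with hd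
  set e : ℕ → ℝ := fun k => Metric.infDist (PB (xs k)) A with he
  have hxsA : ∀ k, xs k ∈ A := by
    intro k
    cases k with
    | zero => exact hxA
    | succ n => exact (hPA (PB (xs n))).1
  have hd_nonneg : ∀ k, 0 ≤ d k := fun k => Metric.infDist_nonneg
  have he_nonneg : ∀ k, 0 ≤ e k := fun k => Metric.infDist_nonneg
  -- interleaved log-convexity
  have hL1 : ∀ k, e k ^ 2 ≤ d k * d (k + 1) := by
    intro k
    have := keyLemma hAconv hBconv (hxsA k) (hPB (xs k)).1 (hPB (xs k)).2
      (hPA (PB (xs k))).1 (hPA (PB (xs k))).2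
    simpa [hd, he, hrec] using this
  have hL2 : ∀ k, d (k + 1) ^ 2 ≤ e k * e (k + 1) := by
    intro k
    have := keyLemma hBconv hAconv (hPB (xs k)).1 (hPA (PB (xs k))).1 (hPA (PB (xs k))).2
      (hPB (PA (PB (xs k)))).1 (hPB (PA (PB (xs k)))).2
    simpa [hd, he, hrec] using this
  -- monotonicity
  have hmono1 : ∀ k, e k ≤ d k := by
    intro k
    calc e k ≤ dist (PB (xs k)) (xs k) := Metric.infDist_le_dist_of_mem (hxsA k)
      _ = ‖xs k - PB (xs k)‖ := by rw [dist_comm, dist_eq_norm]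
      _ = d k := (hPB (xs k)).2
  have hmono2 : ∀ k, d (k + 1) ≤ e k := by
    intro k
    calc d (k + 1) ≤ dist (xs (k + 1)) (PB (xs k)) :=
          Metric.infDist_le_dist_of_mem (hPB (xs k)).1
      _ = ‖PB (xs k) - PA (PB (xs k))‖ := by rw [hrec k, dist_comm, dist_eq_norm]
      _ = e k := (hPA (PB (xs k))).2
  -- step length bound
  have hstep : ∀ k, ‖xs k - xs (k + 1)‖ ≤ d k := by
    intro k
    have h1 : PA (xs k) = xs k := projMemSelf hPA (hxsA k)
    calc ‖xs k - xs (k + 1)‖ = ‖PA (xs k) - PA (PB (xs k))‖ := by rw [h1, hrec k]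
      _ ≤ ‖xs k - PB (xs k)‖ := projNonexpansive hAconv hPA _ _
      _ = d k := (hPB (xs k)).2
  -- xlim bound on d
  have hdlim : ∀ n ≥ p, d n ≤ γ * c ^ n := by
    intro n hn
    calc d n ≤ dist (xs n) xlim := Metric.infDist_le_dist_of_mem hxlim.2
      _ = ‖xs n - xlim‖ := dist_eq_norm _ _
      _ ≤ γ * c ^ n := hbound n hn
  -- KEY: per-step geometric decay
  have hdecay : ∀ k, d (k + 1) ≤ c * d k := by
    intro k
    by_contra hcon
    push_neg at hcon
    have hdk1_pos : 0 < d (k + 1) :=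
      lt_of_le_of_lt (mul_nonneg hc0 (hd_nonneg k)) hcon
    have hek_pos : 0 < e k := lt_of_lt_of_le hdk1_pos (hmono2 k)
    have hdk_pos : 0 < d k := lt_of_lt_of_le hek_pos (hmono1 k)
    -- induction maintaining ratio inequalities
    have main : ∀ j : ℕ, 0 < d (k + j) ∧ 0 < e (k + j) ∧
        e k * d (k + j) ≤ d k * e (k + j) ∧ d (k + 1) * e (k + j) ≤ e k * d (k + j + 1) := by
      intro j
      induction j with
      | zero =>
        refine ⟨hdk_pos, hek_pos, le_of_eq (by ring), le_of_eq (by ring)⟩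
      | succ j ih =>
        obtain ⟨hdm, hem, A3, A4⟩ := ih
        set m := k + j with hm
        have hdm1_pos : 0 < d (m + 1) := by
          rcases lt_or_ge 0 (d (m + 1)) with h | h
          · exact h
          · exfalso
            have h2 : e k * d (m + 1) ≤ 0 := mul_nonpos_of_nonneg_of_nonpos hek_pos.le h
            nlinarith [mul_pos hdk1_pos hem]
        have hem1_pos : 0 < e (m + 1) := by
          have h1 := hL2 m
          nlinarith [sq_nonneg (d (m + 1))]
        have hA3' : e k * d (m + 1) ≤ d k * e (m + 1) := by
          -- from hL2 m, A4, hL1 k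
          have h1 : d (m + 1) ^ 2 ≤ e m * e (m + 1) := hL2 m
          have h2 : e k ^ 2 ≤ d k * d (k + 1) := hL1 k
          -- e k * d(m+1) * (e k * e m) ≤ d k * e(m+1) * (e k * e m)
          have step1 : (e k * d (m + 1)) * (e k * e m)
              ≤ (d k * e (m + 1)) * (e k * e m) := by
            nlinarith [mul_le_mul_of_nonneg_left h1 (mul_nonneg (mul_nonneg (hd_nonneg k) hek_pos.le) hek_pos.le),
              mul_le_mul_of_nonneg_left A4 (mul_nonneg hek_pos.le (hd_nonneg (m+1))),
              mul_le_mul_of_nonneg_left h2 (mul_nonneg hem.le (hd_nonneg (m+1))),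
              mul_pos hek_pos hem, hdm1_pos.le, hek_pos.le, hem.le, hdk_pos.le, hdk1_pos.le]
          exact le_of_mul_le_mul_right step1 (mul_pos hek_pos hem)
        have hA4' : d (k + 1) * e (m + 1) ≤ e k * d (m + 1 + 1) := by
          have h1 : e (m + 1) ^ 2 ≤ d (m + 1) * d (m + 1 + 1) := hL1 (m + 1)
          have h2 : d (m + 1) ^ 2 ≤ e m * e (m + 1) := hL2 m
          have step1 : (d (k + 1) * e (m + 1)) * (d (m + 1) * e m)
              ≤ (e k * d (m + 1 + 1)) * (d (m + 1) * e m) := by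
            nlinarith [mul_le_mul_of_nonneg_left h1 (mul_nonneg hek_pos.le hem.le),
              mul_le_mul_of_nonneg_left h2 (mul_nonneg (hd_nonneg (k+1)) (he_nonneg (m+1))),
              mul_le_mul_of_nonneg_left A4 (mul_nonneg (hd_nonneg (m+1)) (he_nonneg (m+1))),
              mul_pos hdm1_pos hem, hem1_pos.le, hdk1_pos.le]
          exact le_of_mul_le_mul_right step1 (mul_pos hdm1_pos hem)
        exact ⟨hdm1_pos, hem1_pos, hA3', hA4'⟩
    -- diamond: d(k+1) * d(k+j) ≤ d k * d(k+j+1)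
    have hdiamond : ∀ j : ℕ, d (k + 1) * d (k + j) ≤ d k * d (k + j + 1) := by
      intro j
      obtain ⟨hdm, hem, A3, A4⟩ := main j
      have step1 : (d (k + 1) * d (k + j)) * e k ≤ (d k * d (k + j + 1)) * e k := by
        calc (d (k + 1) * d (k + j)) * e k = d (k + 1) * (e k * d (k + j)) := by ring
          _ ≤ d (k + 1) * (d k * e (k + j)) :=
              mul_le_mul_of_nonneg_left A3 hdk1_pos.le
          _ = d k * (d (k + 1) * e (k + j)) := by ring
          _ ≤ d k * (e k * d (k + j + 1)) :=
              mul_le_mul_of_nonneg_left A4 hdk_pos.le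
          _ = (d k * d (k + j + 1)) * e k := by ring
      exact le_of_mul_le_mul_right step1 hek_pos
    -- geometric growth: d k * d(k+1)^n ≤ d(k+n) * (d k)^n
    have hgeom : ∀ n : ℕ, d k * d (k + 1) ^ n ≤ d (k + n) * d k ^ n := by
      intro n
      induction n with
      | zero => simp
      | succ n ih =>
        have h1 : d k * d (k + 1) ^ (n + 1) = (d k * d (k + 1) ^ n) * d (k + 1) := by ring
        have h2 : (d k * d (k + 1) ^ n) * d (k + 1) ≤ (d (k + n) * d k ^ n) * d (k + 1) :=
          mul_le_mul_of_nonneg_right ih hdk1_pos.le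
        have h3 : (d (k + n) * d k ^ n) * d (k + 1) = (d (k + 1) * d (k + n)) * d k ^ n := by
          ring
        have h4 : (d (k + 1) * d (k + n)) * d k ^ n ≤ (d k * d (k + n + 1)) * d k ^ n :=
          mul_le_mul_of_nonneg_right (hdiamond n) (pow_nonneg hdk_pos.le n)
        calc d k * d (k + 1) ^ (n + 1) = (d k * d (k + 1) ^ n) * d (k + 1) := h1
          _ ≤ (d (k + n) * d k ^ n) * d (k + 1) := h2
          _ = (d (k + 1) * d (k + n)) * d k ^ n := h3
          _ ≤ (d k * d (k + n + 1)) * d k ^ n := h4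
          _ = d (k + n + 1) * d k ^ (n + 1) := by ring
    -- combine with the R-linear bound to derive a contradiction
    have hconc : ∀ n ≥ p, d k * d (k + 1) ^ n ≤ (γ * c ^ k) * (c * d k) ^ n := by
      intro n hn
      have h1 : d (k + n) ≤ γ * c ^ (k + n) := hdlim (k + n) (le_trans hn (Nat.le_add_left n k))
      calc d k * d (k + 1) ^ n ≤ d (k + n) * d k ^ n := hgeom n
        _ ≤ (γ * c ^ (k + n)) * d k ^ n := by
            apply mul_le_mul_of_nonneg_right h1 (pow_nonneg hdk_pos.le n)
        _ = (γ * c ^ k) * (c * d k) ^ n := by rw [pow_add, mul_pow]; ring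
    rcases eq_or_lt_of_le (mul_nonneg hc0 hdk_pos.le) with hq0 | hq0
    · -- c * d k = 0 : contradiction at n = p + 1
      have h1 := hconc (p + 1) (Nat.le_succ_of_le (Nat.le_refl p))
      rw [← hq0, zero_pow (Nat.succ_ne_zero p), mul_zero] at h1
      have h2 : 0 < d k * d (k + 1) ^ (p + 1) :=
        mul_pos hdk_pos (pow_pos hdk1_pos _)
      linarith
    · -- c * d k > 0
      have hr1 : 1 < d (k + 1) / (c * d k) := (one_lt_div hq0).mpr hcon
      obtain ⟨n₀, hn₀⟩ := pow_unbounded_of_one_lt ((γ * c ^ k) / d k) hr1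
      set n := max n₀ p with hn
      have hle : (d (k + 1) / (c * d k)) ^ n₀ ≤ (d (k + 1) / (c * d k)) ^ n :=
        pow_le_pow_right₀ hr1.le (le_max_left _ _)
      have hmain := hconc n (le_max_right _ _)
      have hfin : (d (k + 1) / (c * d k)) ^ n ≤ (γ * c ^ k) / d k := by
        rw [div_pow, div_le_div_iff₀ (pow_pos hq0 n) hdk_pos]
        calc d (k + 1) ^ n * d k = d k * d (k + 1) ^ n := by ring
          _ ≤ (γ * c ^ k) * (c * d k) ^ n := hmain
      linarith [lt_of_lt_of_le (lt_of_lt_of_le hn₀ hle) hfin]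
  -- geometric bound on d
  have hdgeo : ∀ k, d k ≤ c ^ k * d 0 := by
    intro k
    induction k with
    | zero => simp
    | succ k ih =>
      calc d (k + 1) ≤ c * d k := hdecay k
        _ ≤ c * (c ^ k * d 0) := mul_le_mul_of_nonneg_left ih hc0
        _ = c ^ (k + 1) * d 0 := by ring
  -- partial sums bound
  have h1c : 0 < 1 - c := by linarith
  have hsum : ∀ n : ℕ, ‖xs 0 - xs n‖ ≤ (1 / (1 - c)) * d 0 := by
    intro n
    have h1 : dist (xs 0) (xs n) ≤ ∑ i ∈ Finset.range n, dist (xs i) (xs (i + 1)) :=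
      dist_le_range_sum_dist xs n
    have h2 : ∑ i ∈ Finset.range n, dist (xs i) (xs (i + 1))
        ≤ ∑ i ∈ Finset.range n, c ^ i * d 0 := by
      apply Finset.sum_le_sum
      intro i _
      calc dist (xs i) (xs (i + 1)) = ‖xs i - xs (i + 1)‖ := dist_eq_norm _ _
        _ ≤ d i := hstep i
        _ ≤ c ^ i * d 0 := hdgeo i
    have h3 : ∑ i ∈ Finset.range n, c ^ i * d 0 = (∑ i ∈ Finset.range n, c ^ i) * d 0 := by
      rw [Finset.sum_mul]
    have h4 : (∑ i ∈ Finset.range n, c ^ i) ≤ 1 / (1 - c) := by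
      have hgs : (∑ i ∈ Finset.range n, c ^ i) * (c - 1) = c ^ n - 1 := geom_sum_mul c n
      have hcn : 0 ≤ c ^ n := pow_nonneg hc0 n
      rw [le_div_iff₀ h1c]
      nlinarith [hgs]
    have h5 : (∑ i ∈ Finset.range n, c ^ i) * d 0 ≤ (1 / (1 - c)) * d 0 :=
      mul_le_mul_of_nonneg_right h4 (hd_nonneg 0)
    calc ‖xs 0 - xs n‖ = dist (xs 0) (xs n) := (dist_eq_norm _ _).symm
      _ ≤ ∑ i ∈ Finset.range n, dist (xs i) (xs (i + 1)) := h1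
      _ ≤ ∑ i ∈ Finset.range n, c ^ i * d 0 := h2
      _ = (∑ i ∈ Finset.range n, c ^ i) * d 0 := h3
      _ ≤ (1 / (1 - c)) * d 0 := h5
  -- limit argument
  have hxs0 : xs 0 = x := rfl
  have hfinal : ‖x - xlim‖ ≤ (1 / (1 - c)) * d 0 := by
    have hb : ∀ n ≥ p, ‖x - xlim‖ ≤ (1 / (1 - c)) * d 0 + γ * c ^ n := by
      intro n hn
      calc ‖x - xlim‖ = ‖(xs 0 - xs n) + (xs n - xlim)‖ := by rw [hxs0]; congr 1; abel
        _ ≤ ‖xs 0 - xs n‖ + ‖xs n - xlim‖ := norm_add_le _ _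
        _ ≤ (1 / (1 - c)) * d 0 + γ * c ^ n := add_le_add (hsum n) (hbound n hn)
    have htend : Tendsto (fun n : ℕ => (1 / (1 - c)) * d 0 + γ * c ^ n) atTop
        (𝓝 ((1 / (1 - c)) * d 0 + γ * 0)) := by
      apply Tendsto.add tendsto_const_nhds
      exact (tendsto_pow_atTop_nhds_zero_of_lt_one hc0 hc1).const_mul γ
    have := ge_of_tendsto htend (eventually_atTop.mpr ⟨p, hb⟩)
    simpa using this
  calc Metric.infDist x (A ∩ B) ≤ dist x xlim := Metric.infDist_le_dist_of_mem hxlim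
    _ = ‖x - xlim‖ := dist_eq_norm _ _
    _ ≤ (1 / (1 - c)) * d 0 := hfinal
    _ = (1 / (1 - c)) * Metric.infDist x B := rfl
end

section
/- Let A and B be nonempty closed convex subsets of E with A ∩ B ≠ ∅. Then the following are equivalent: (i) there exists κ < ∞ such that dist(x, A ∩ B) ≤ κ·dist(x, B) for all x ∈ A (global subtransversality); (ii) there exists κ̄ < ∞ such that for every x̄ in the boundary (frontier) of A ∩ B there is δ > 0 with dist(x, A ∩ B) ≤ κ̄·dist(x, B) for all x ∈ A ∩ B_δ(x̄). Moreover, (i) implies (ii) with κ̄ = κ, and (ii) implies (i) with κ = κ̄². -/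
open Metric

/-- For nonempty closed convex sets `A`, `B` with `A ∩ B ≠ ∅`: global
subtransversality (`dist(x, A∩B) ≤ κ·dist(x,B)` for all `x ∈ A`) is equivalent to local
subtransversality at every point of the boundary of `A ∩ B` with uniformly bounded
constants. Quantitatively: (i) implies (ii) with the same constant `κ̄ = κ`, and (ii)
implies (i) with `κ = κ̄²`. -/
theorem global_subtransversality_iff_boundary_subtransversality
    {E : Type*} [NormedAddCommGroup E] [InnerProductSpace ℝ E] [FiniteDimensional ℝ E]
    (A B : Set E) (hAne : A.Nonempty) (hAc : IsClosed A) (hAconv : Convex ℝ A)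
    (hBne : B.Nonempty) (hBc : IsClosed B) (hBconv : Convex ℝ B)
    (hABne : (A ∩ B).Nonempty) :
    (∀ κ : ℝ, (∀ x ∈ A, Metric.infDist x (A ∩ B) ≤ κ * Metric.infDist x B) →
      ∀ xbar ∈ frontier (A ∩ B), ∃ δ > (0 : ℝ), ∀ x ∈ A ∩ Metric.ball xbar δ,
        Metric.infDist x (A ∩ B) ≤ κ * Metric.infDist x B) ∧
    (∀ κ' : ℝ, (∀ xbar ∈ frontier (A ∩ B), ∃ δ > (0 : ℝ),
        ∀ x ∈ A ∩ Metric.ball xbar δ,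
          Metric.infDist x (A ∩ B) ≤ κ' * Metric.infDist x B) →
      ∀ x ∈ A, Metric.infDist x (A ∩ B) ≤ κ' ^ 2 * Metric.infDist x B) := by
  constructor
  · intro κ h xbar _
    exact ⟨1, one_pos, fun x hx => h x hx.1⟩
  · intro κ' h x hxA
    by_cases hxB : x ∈ B
    · rw [infDist_zero_of_mem (Set.mem_inter hxA hxB)]
      exact mul_nonneg (sq_nonneg _) infDist_nonneg
    · have hABc : IsClosed (A ∩ B) := hAc.inter hBc
      obtain ⟨xb, hxbmem, hxbd⟩ := hABc.exists_infDist_eq_dist hABne x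
      set d := infDist x (A ∩ B) with hd_def
      have hdB : infDist x B ≤ d :=
        infDist_le_infDist_of_subset Set.inter_subset_right hABne
      have hBpos : 0 < infDist x B := (hBc.notMem_iff_infDist_pos hBne).mp hxB
      have hd : 0 < d := lt_of_lt_of_le hBpos hdB
      -- distance computations along the segment from `xb` to `x`
      have hdist_x : ∀ t : ℝ, 0 ≤ t → t ≤ 1 →
          dist x (xb + t • (x - xb)) = (1 - t) * d := by
        intro t ht0 ht1
        have hs : x - (xb + t • (x - xb)) = (1 - t) • (x - xb) := by
          rw [sub_smul, one_smul]; abel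
        rw [dist_eq_norm, hs, norm_smul, Real.norm_eq_abs, abs_of_nonneg (by linarith),
          ← dist_eq_norm, ← hxbd]
      have hdist_xb : ∀ t : ℝ, 0 ≤ t → dist (xb + t • (x - xb)) xb = t * d := by
        intro t ht0
        rw [dist_eq_norm, add_sub_cancel_left, norm_smul, Real.norm_eq_abs,
          abs_of_nonneg ht0, ← dist_eq_norm, ← hxbd]
      have hkey : ∀ ε : ℝ, 0 < ε → min (1/2 : ℝ) (ε / (2 * (d + 1))) * d < ε := by
        intro ε hε
        have h1 : min (1/2 : ℝ) (ε / (2 * (d + 1))) ≤ ε / (2 * (d + 1)) := min_le_right _ _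
        have h2 : ε / (2 * (d + 1)) * d < ε := by
          rw [div_mul_eq_mul_div, div_lt_iff₀ (by linarith)]
          nlinarith
        calc min (1/2 : ℝ) (ε / (2 * (d + 1))) * d ≤ ε / (2 * (d + 1)) * d :=
              mul_le_mul_of_nonneg_right h1 hd.le
          _ < ε := h2
      -- `xb` lies on the frontier of `A ∩ B`
      have hfront : xb ∈ frontier (A ∩ B) := by
        refine ⟨subset_closure hxbmem, fun hint => ?_⟩
        obtain ⟨ε, hε, hball⟩ := Metric.isOpen_iff.mp isOpen_interior xb hint
        set t := min (1/2 : ℝ) (ε / (2 * (d + 1))) with ht_def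
        have ht0 : 0 < t := lt_min (by norm_num) (by positivity)
        have ht1 : t ≤ 1/2 := min_le_left _ _
        have hy : xb + t • (x - xb) ∈ A ∩ B := by
          apply interior_subset (hball ?_)
          rw [mem_ball, hdist_xb t ht0.le]
          exact hkey ε hε
        have h1 : d ≤ dist x (xb + t • (x - xb)) := infDist_le_dist_of_mem hy
        rw [hdist_x t ht0.le (by linarith)] at h1
        nlinarith [mul_pos ht0 hd]
      obtain ⟨δ, hδ, hloc⟩ := h xb hfront
      set t := min (1/2 : ℝ) (δ / (2 * (d + 1))) with ht_def
      have ht0 : 0 < t := lt_min (by norm_num) (by positivity)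
      have ht1 : t ≤ 1/2 := min_le_left _ _
      set y := xb + t • (x - xb) with hy_def
      have hyA : y ∈ A := by
        have hy2 : y = (1 - t) • xb + t • x := by
          rw [hy_def, smul_sub, sub_smul, one_smul]; abel
        rw [hy2]
        exact hAconv hxbmem.1 hxA (by linarith) ht0.le (by ring)
      have hyball : y ∈ ball xb δ := by
        rw [mem_ball, hy_def, hdist_xb t ht0.le]
        exact hkey δ hδ
      have hmain := hloc y ⟨hyA, hyball⟩
      -- lower bound on `infDist y (A ∩ B)`
      have hlow : t * d ≤ infDist y (A ∩ B) := by
        by_contra hcon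
        push_neg at hcon
        obtain ⟨z, hz, hzd⟩ := (infDist_lt_iff hABne).mp hcon
        have h1 : d ≤ dist x z := infDist_le_dist_of_mem hz
        have h2 : dist x z ≤ dist x y + dist y z := dist_triangle _ _ _
        have h3 : dist x y = (1 - t) * d := hdist_x t ht0.le (by linarith)
        linarith
      -- upper bound on `infDist y B`
      obtain ⟨b, hb, hbd⟩ := hBc.exists_infDist_eq_dist hBne x
      have hb' : (1 - t) • xb + t • b ∈ B :=
        hBconv hxbmem.2 hb (by linarith) ht0.le (by ring)
      have hup : infDist y B ≤ t * infDist x B := by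
        calc infDist y B ≤ dist y ((1 - t) • xb + t • b) := infDist_le_dist_of_mem hb'
          _ = t * dist x b := by
              have hs : y - ((1 - t) • xb + t • b) = t • (x - b) := by
                rw [hy_def, smul_sub, smul_sub, sub_smul, one_smul]; abel
              rw [dist_eq_norm, hs, norm_smul, Real.norm_eq_abs, abs_of_nonneg ht0.le,
                ← dist_eq_norm]
          _ = t * infDist x B := by rw [← hbd]
      have hκpos : 0 < κ' := by
        by_contra hneg
        push_neg at hneg
        have h1 : κ' * infDist y B ≤ 0 := mul_nonpos_of_nonpos_of_nonneg hneg infDist_nonneg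
        nlinarith [mul_pos ht0 hd]
      have hκ : d ≤ κ' * infDist x B := by
        have h1 : t * d ≤ κ' * (t * infDist x B) :=
          hlow.trans (hmain.trans (mul_le_mul_of_nonneg_left hup hκpos.le))
        nlinarith
      nlinarith [mul_le_mul_of_nonneg_left hκ hκpos.le]
end

section
/- Let A and B be nonempty closed convex subsets of E with A ∩ B ≠ ∅. Then for every a ∈ A and every x ∈ A ∩ B, ‖P_B a − x‖ · ‖P_B a − a‖ ≥ ‖a − x‖ · ‖P_A(P_B a) − P_B a‖. -/
/-- For nonempty closed convex sets `A`, `B` with `A ∩ B ≠ ∅`, for every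
`a ∈ A` and `x ∈ A ∩ B`,
`‖PB a − x‖·‖PB a − a‖ ≥ ‖a − x‖·‖PA(PB a) − PB a‖`. -/
theorem projection_product_inequality_convex
    {E : Type*} [NormedAddCommGroup E] [InnerProductSpace ℝ E] [FiniteDimensional ℝ E]
    (A B : Set E) (hAne : A.Nonempty) (hAc : IsClosed A) (hAconv : Convex ℝ A)
    (hBne : B.Nonempty) (hBc : IsClosed B) (hBconv : Convex ℝ B)
    (hABne : (A ∩ B).Nonempty)
    (PA PB : E → E)
    (hPA : ∀ y, PA y ∈ A ∧ ‖y - PA y‖ = Metric.infDist y A)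
    (hPB : ∀ y, PB y ∈ B ∧ ‖y - PB y‖ = Metric.infDist y B) :
    ∀ a ∈ A, ∀ x ∈ A ∩ B,
      ‖PB a - x‖ * ‖PB a - a‖ ≥ ‖a - x‖ * ‖PA (PB a) - PB a‖ := by
  intro a ha x hx
  obtain ⟨hxA, hxB⟩ := hx
  set b := PB a with hb
  set u : E := b - a with hu
  set v : E := x - a with hv
  set s : ℝ := inner ℝ u v with hs
  have hCS : s ^ 2 ≤ ‖u‖ ^ 2 * ‖v‖ ^ 2 := by
    have h1 := abs_real_inner_le_norm u v
    have h2 : |s| ^ 2 = s ^ 2 := sq_abs s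
    nlinarith [abs_nonneg s, norm_nonneg u, norm_nonneg v]
  set t : ℝ := if s ≤ 0 then 0 else if ‖v‖ ^ 2 ≤ s then 1 else s / ‖v‖ ^ 2 with ht
  have hvpos : ¬ s ≤ 0 → (0:ℝ) < ‖v‖ ^ 2 := by
    intro h1
    rcases eq_or_lt_of_le (norm_nonneg v) with h | h
    · exfalso
      apply h1
      have : v = 0 := by rwa [eq_comm, norm_eq_zero] at h
      simp [hs, this]
    · positivity
  have ht0 : 0 ≤ t := by
    rw [ht]; split_ifs with h1 h2
    · exact le_refl 0
    · norm_num
    · push_neg at h1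
      exact (div_pos h1 (hvpos (not_le_of_gt h1))).le
  have ht1 : t ≤ 1 := by
    rw [ht]; split_ifs with h1 h2
    · norm_num
    · exact le_refl 1
    · rw [div_le_one (hvpos h1)]
      linarith
  -- the point on the segment
  have hc : a + t • v ∈ A := by
    have h := hAconv ha hxA (by linarith : (0:ℝ) ≤ 1 - t) ht0 (by ring)
    convert h using 1
    rw [hv]
    module
  have hdist : ‖PA b - b‖ ≤ ‖u - t • v‖ := by
    have h1 := (hPA b).2
    have h2 : Metric.infDist b A ≤ dist b (a + t • v) := Metric.infDist_le_dist_of_mem hc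
    rw [norm_sub_rev, h1]
    calc Metric.infDist b A ≤ dist b (a + t • v) := h2
      _ = ‖u - t • v‖ := by rw [dist_eq_norm, hu]; congr 1; abel
  -- squared norm expansions
  have e1 : ‖u - t • v‖ ^ 2 = ‖u‖ ^ 2 - 2 * (t * s) + t ^ 2 * ‖v‖ ^ 2 := by
    rw [@norm_sub_sq_real, real_inner_smul_right, norm_smul, ← hs]
    simp [mul_pow, sq_abs]
  have e2 : ‖u - v‖ ^ 2 = ‖u‖ ^ 2 - 2 * s + ‖v‖ ^ 2 := by
    rw [@norm_sub_sq_real, ← hs]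
  -- key squared inequality
  have keysq : ‖v‖ ^ 2 * ‖u - t • v‖ ^ 2 ≤ ‖u - v‖ ^ 2 * ‖u‖ ^ 2 := by
    rw [e1, e2, ht]
    split_ifs with h1 h2
    · nlinarith [norm_nonneg u, norm_nonneg v, sq_nonneg (‖u‖ : ℝ)]
    · have hL : ‖v‖ ^ 2 ≤ ‖u‖ ^ 2 := by nlinarith
      nlinarith [sq_nonneg (‖u‖ ^ 2 - 2 * s + ‖v‖ ^ 2)]
    · have hL := hvpos h1
      have hdiv : s / ‖v‖ ^ 2 * ‖v‖ ^ 2 = s := div_mul_cancel₀ s (ne_of_gt hL)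
      have expand : ‖v‖ ^ 2 * (‖u‖ ^ 2 - 2 * (s / ‖v‖ ^ 2 * s) + (s / ‖v‖ ^ 2) ^ 2 * ‖v‖ ^ 2)
          = ‖v‖ ^ 2 * ‖u‖ ^ 2 - s ^ 2 := by
        linear_combination (s / ‖v‖ ^ 2 * ‖v‖ ^ 2 - s) * hdiv
      rw [expand]
      nlinarith [sq_nonneg (‖u‖ ^ 2 - s)]
  have key : ‖v‖ * ‖u - t • v‖ ≤ ‖u - v‖ * ‖u‖ := by
    nlinarith [norm_nonneg v, norm_nonneg (u - t • v), norm_nonneg (u - v), norm_nonneg u,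
      mul_nonneg (norm_nonneg (u - v)) (norm_nonneg u),
      mul_nonneg (norm_nonneg v) (norm_nonneg (u - t • v))]
  have hax : ‖a - x‖ = ‖v‖ := by rw [hv, norm_sub_rev]
  have hbx : ‖b - x‖ = ‖u - v‖ := by rw [hu, hv]; congr 1; abel
  calc ‖a - x‖ * ‖PA b - b‖ ≤ ‖v‖ * ‖u - t • v‖ := by
        rw [hax]
        exact mul_le_mul_of_nonneg_left hdist (norm_nonneg v)
    _ ≤ ‖u - v‖ * ‖u‖ := key
    _ = ‖b - x‖ * ‖u‖ := by rw [hbx]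
end
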